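/- arXiv:1208.1036 — 3 statements merged into one kernel-verified Lean document; each statement's English description precedes it below -/
import Mathlib

section
/- Let A be an n×n nonnegative real matrix with r(A) > 0, let C and D be real diagonal n×n matrices, and let t ∈ [0,1]. Then log r(e^{(1−t)C + tD} A) ≤ (1−t)·log r(e^{C} A) + t·log r(e^{D} A). -/
open Matrix

/-- Spectral radius of a real square matrix: the maximum modulus of its complex
eigenvalues. -/
noncomputable def specRad {n : ℕ} (A : Matrix (Fin n) (Fin n) ℝ) : ℝ :=
  sSup {x : ℝ | ∃ μ ∈ spectrum ℂ (A.map Complex.ofReal), x = ‖μ‖}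

/-- A nonnegative matrix is irreducible if for every pair (i,j) some power has a
positive (i,j) entry. -/
def MatIrred {n : ℕ} (A : Matrix (Fin n) (Fin n) ℝ) : Prop :=
  ∀ i j : Fin n, ∃ m : ℕ, 0 < m ∧ 0 < (A ^ m) i j

/-- For a real diagonal matrix D = diag d, `expDiag d` is diag (exp d). -/
noncomputable def expDiag {n : ℕ} (d : Fin n → ℝ) : Matrix (Fin n) (Fin n) ℝ :=
  Matrix.diagonal fun i => Real.exp (d i)

/-- Property 1: equality in the log-convexity inequality forces C - D to be scalar. -/
def Property1 {n : ℕ} (A : Matrix (Fin n) (Fin n) ℝ) : Prop :=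
  ∀ C D : Fin n → ℝ, ∀ t ∈ Set.Ioo (0:ℝ) 1,
    Real.log (specRad (expDiag (fun i => (1 - t) * C i + t * D i) * A)) =
      (1 - t) * Real.log (specRad (expDiag C * A)) +
        t * Real.log (specRad (expDiag D * A)) →
    ∃ c : ℝ, ∀ i, C i - D i = c


section AuxKingman

open Filter Topology

attribute [local instance] Matrix.linftyOpNormedRing Matrix.linftyOpNormedAlgebra

variable {n : ℕ}

private lemma holder_sum {ι : Type*} (s : Finset ι) {t : ℝ} (ht0 : 0 < t) (ht1 : t < 1)
    (a b : ι → ℝ) (ha : ∀ i ∈ s, 0 ≤ a i) (hb : ∀ i ∈ s, 0 ≤ b i) :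
    ∑ i ∈ s, a i ^ (1 - t) * b i ^ t ≤ (∑ i ∈ s, a i) ^ (1 - t) * (∑ i ∈ s, b i) ^ t := by
  have h1t : (0:ℝ) < 1 - t := by linarith
  have hpq : Real.HolderConjugate (1 - t)⁻¹ t⁻¹ := by
    constructor
    · rw [inv_inv, inv_inv, inv_one]; ring
    · exact inv_pos.2 h1t
    · exact inv_pos.2 ht0
  have H := Real.inner_le_Lp_mul_Lq_of_nonneg s hpq
    (f := fun i => a i ^ (1 - t)) (g := fun i => b i ^ t)
    (fun i hi => Real.rpow_nonneg (ha i hi) _) (fun i hi => Real.rpow_nonneg (hb i hi) _)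
  have e1 : ∑ i ∈ s, (a i ^ (1 - t)) ^ ((1 - t)⁻¹) = ∑ i ∈ s, a i :=
    Finset.sum_congr rfl fun i hi => by
      rw [← Real.rpow_mul (ha i hi), mul_inv_cancel₀ (ne_of_gt h1t), Real.rpow_one]
  have e2 : ∑ i ∈ s, (b i ^ t) ^ (t⁻¹) = ∑ i ∈ s, b i :=
    Finset.sum_congr rfl fun i hi => by
      rw [← Real.rpow_mul (hb i hi), mul_inv_cancel₀ (ne_of_gt ht0), Real.rpow_one]
  rw [e1, e2, one_div, one_div, inv_inv, inv_inv] at H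
  exact H

private lemma pow_entry_nonneg {P : Matrix (Fin n) (Fin n) ℝ} (hP : ∀ i j, 0 ≤ P i j) :
    ∀ (m : ℕ) (i j : Fin n), 0 ≤ (P ^ m) i j := by
  intro m
  induction m with
  | zero =>
    intro i j
    rw [pow_zero]
    by_cases h : i = j <;> simp [Matrix.one_apply, h]
  | succ m ih =>
    intro i j
    rw [pow_succ, Matrix.mul_apply]
    exact Finset.sum_nonneg fun k _ => mul_nonneg (ih i k) (hP k j)

private lemma row_sum_le_norm (P : Matrix (Fin n) (Fin n) ℝ) (i : Fin n) :
    ∑ j, ‖P i j‖ ≤ ‖P‖ := by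
  have h : (∑ j, ‖P i j‖₊) ≤ ‖P‖₊ := by
    rw [Matrix.linfty_opNNNorm_def]
    exact Finset.le_sup (f := fun i => ∑ j, ‖P i j‖₊) (Finset.mem_univ i)
  simpa [NNReal.coe_sum] using NNReal.coe_le_coe.2 h

private lemma norm_le_of_rows {P : Matrix (Fin n) (Fin n) ℝ} {c : ℝ} (hc : 0 ≤ c)
    (h : ∀ i, ∑ j, ‖P i j‖ ≤ c) : ‖P‖ ≤ c := by
  rw [Matrix.linfty_opNorm_def]
  have h2 : (Finset.univ.sup fun i => ∑ j, ‖P i j‖₊) ≤ (⟨c, hc⟩ : NNReal) :=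
    Finset.sup_le fun i _ => by
      exact NNReal.coe_le_coe.1 (by push_cast; exact h i)
  exact NNReal.coe_le_coe.2 h2


private lemma map_pow_ofReal (B : Matrix (Fin n) (Fin n) ℝ) (m : ℕ) :
    (B.map Complex.ofReal) ^ m = (B ^ m).map Complex.ofReal := by
  have := map_pow (Complex.ofRealHom.mapMatrix (m := Fin n)) B m
  simp only [RingHom.mapMatrix_apply] at this; exact this.symm

private lemma norm_map_ofReal (P : Matrix (Fin n) (Fin n) ℝ) :
    ‖P.map Complex.ofReal‖ = ‖P‖ := by
  have h : ‖P.map Complex.ofReal‖₊ = ‖P‖₊ := by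
    rw [Matrix.linfty_opNNNorm_def, Matrix.linfty_opNNNorm_def]
    congr 1
    funext i
    exact Finset.sum_congr rfl fun j _ => by simp [Matrix.map_apply]
  rw [← coe_nnnorm, ← coe_nnnorm, h]

private lemma tendsto_gelfand [NeZero n] (B : Matrix (Fin n) (Fin n) ℝ) :
    Tendsto (fun m : ℕ => ‖B ^ m‖ ^ (1 / (m:ℝ))) atTop
      (nhds (spectralRadius ℂ (B.map Complex.ofReal)).toReal) := by
  haveI : CompleteSpace (Matrix (Fin n) (Fin n) ℂ) := FiniteDimensional.complete ℂ _
  have hR : spectralRadius ℂ (B.map Complex.ofReal) ≠ ⊤ :=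
    ((spectrum.spectralRadius_le_nnnorm (𝕜 := ℂ) (B.map Complex.ofReal)).trans_lt ENNReal.coe_lt_top).ne
  have h := spectrum.pow_norm_pow_one_div_tendsto_nhds_spectralRadius (B.map Complex.ofReal)
  have h2 := (ENNReal.tendsto_toReal hR).comp h
  refine h2.congr fun m => ?_
  simp only [Function.comp_apply]
  rw [ENNReal.toReal_ofReal (Real.rpow_nonneg (norm_nonneg _) _), map_pow_ofReal,
    norm_map_ofReal]

private lemma specRad_eq [NeZero n] (B : Matrix (Fin n) (Fin n) ℝ) :
    specRad B = (spectralRadius ℂ (B.map Complex.ofReal)).toReal := by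
  haveI : CompleteSpace (Matrix (Fin n) (Fin n) ℂ) := FiniteDimensional.complete ℂ _
  obtain ⟨μ, hμ, hμeq⟩ := spectrum.exists_nnnorm_eq_spectralRadius_of_nonempty
    (spectrum.nonempty (B.map Complex.ofReal))
  have hub : ∀ x ∈ {x : ℝ | ∃ ν ∈ spectrum ℂ (B.map Complex.ofReal), x = ‖ν‖},
      x ≤ ‖μ‖ := by
    rintro x ⟨ν, hν, rfl⟩
    have h1 : (‖ν‖₊ : ENNReal) ≤ spectralRadius ℂ (B.map Complex.ofReal) := by
      unfold spectralRadius
      exact le_iSup₂ (f := fun k (_ : k ∈ spectrum ℂ (B.map Complex.ofReal)) => (‖k‖₊ : ENNReal))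
        ν hν
    rw [← hμeq] at h1
    have h2 : ‖ν‖ ≤ ‖μ‖ := by exact_mod_cast h1
    calc ‖ν‖ = ‖ν‖ := rfl
      _ ≤ ‖μ‖ := h2
  have hmem : ‖μ‖ ∈ {x : ℝ | ∃ ν ∈ spectrum ℂ (B.map Complex.ofReal), x = ‖ν‖} :=
    ⟨μ, hμ, rfl⟩
  rw [specRad, IsGreatest.csSup_eq ⟨hmem, hub⟩, ← hμeq, ENNReal.coe_toReal, coe_nnnorm]


private lemma expDiag_mul_apply (E : Fin n → ℝ) (A : Matrix (Fin n) (Fin n) ℝ) (i j : Fin n) :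
    (expDiag E * A) i j = Real.exp (E i) * A i j := by
  rw [expDiag, Matrix.diagonal_mul]

private lemma expDiag_mul_nonneg (E : Fin n → ℝ) {A : Matrix (Fin n) (Fin n) ℝ}
    (hA : ∀ i j, 0 ≤ A i j) (i j : Fin n) : 0 ≤ (expDiag E * A) i j := by
  rw [expDiag_mul_apply]
  exact mul_nonneg (Real.exp_pos _).le (hA i j)

private lemma pow_entry_nonneg' {P : Matrix (Fin n) (Fin n) ℝ} (hP : ∀ i j, 0 ≤ P i j) :
    ∀ (m : ℕ) (i j : Fin n), 0 ≤ (P ^ m) i j := by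
  intro m
  induction m with
  | zero =>
    intro i j
    rw [pow_zero]
    by_cases h : i = j <;> simp [Matrix.one_apply, h]
  | succ m ih =>
    intro i j
    rw [pow_succ, Matrix.mul_apply]
    exact Finset.sum_nonneg fun k _ => mul_nonneg (ih i k) (hP k j)

private lemma exp_rpow' (x p : ℝ) : Real.exp x ^ p = Real.exp (x * p) := by
  rw [Real.rpow_def_of_pos (Real.exp_pos x), Real.log_exp]

private lemma entry_interp {A : Matrix (Fin n) (Fin n) ℝ} (hA : ∀ i j, 0 ≤ A i j)
    (C D : Fin n → ℝ) {t : ℝ} (ht0 : 0 < t) (ht1 : t < 1) (i j : Fin n) :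
    (expDiag (fun i => (1 - t) * C i + t * D i) * A) i j =
      ((expDiag C * A) i j) ^ (1 - t) * ((expDiag D * A) i j) ^ t := by
  rw [expDiag_mul_apply, expDiag_mul_apply, expDiag_mul_apply]
  rcases eq_or_lt_of_le (hA i j) with h | h
  · rw [← h, mul_zero, mul_zero, mul_zero,
      Real.zero_rpow (ne_of_gt (by linarith : (0:ℝ) < 1 - t)),
      Real.zero_rpow (ne_of_gt ht0), mul_zero]
  · have e : Real.exp (C i) ^ (1 - t) * Real.exp (D i) ^ t
        = Real.exp ((1 - t) * C i + t * D i) := by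
      rw [exp_rpow', exp_rpow', ← Real.exp_add]
      congr 1
      ring
    have a : A i j ^ (1 - t) * A i j ^ t = A i j := by
      rw [← Real.rpow_add h]
      norm_num
    calc Real.exp ((1 - t) * C i + t * D i) * A i j
        = (Real.exp (C i) ^ (1 - t) * Real.exp (D i) ^ t) * (A i j ^ (1 - t) * A i j ^ t) := by
          rw [e, a]
      _ = (Real.exp (C i) * A i j) ^ (1 - t) * (Real.exp (D i) * A i j) ^ t := by
          rw [Real.mul_rpow (Real.exp_pos _).le h.le, Real.mul_rpow (Real.exp_pos _).le h.le]
          ring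

private lemma pow_entry_interp_le {A : Matrix (Fin n) (Fin n) ℝ} (hA : ∀ i j, 0 ≤ A i j)
    (C D : Fin n → ℝ) {t : ℝ} (ht0 : 0 < t) (ht1 : t < 1) (m : ℕ) (i j : Fin n) :
    ((expDiag (fun i => (1 - t) * C i + t * D i) * A) ^ m) i j ≤
      (((expDiag C * A) ^ m) i j) ^ (1 - t) * (((expDiag D * A) ^ m) i j) ^ t := by
  have hB0 := expDiag_mul_nonneg C hA
  have hB1 := expDiag_mul_nonneg D hA
  have h0m := pow_entry_nonneg' hB0
  have h1m := pow_entry_nonneg' hB1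
  induction m generalizing i j with
  | zero =>
    simp only [pow_zero]
    by_cases h : i = j
    · simp [Matrix.one_apply, h]
    · simp [Matrix.one_apply, h, Real.zero_rpow (ne_of_gt ht0),
        Real.zero_rpow (ne_of_gt (by linarith : (0:ℝ) < 1 - t))]
  | succ m ih =>
    rw [pow_succ, pow_succ, pow_succ, Matrix.mul_apply, Matrix.mul_apply, Matrix.mul_apply]
    calc ∑ k, ((expDiag (fun i => (1 - t) * C i + t * D i) * A) ^ m) i k *
            (expDiag (fun i => (1 - t) * C i + t * D i) * A) k j
        ≤ ∑ k, ((((expDiag C * A) ^ m) i k * (expDiag C * A) k j) ^ (1 - t) *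
            ((((expDiag D * A) ^ m) i k * (expDiag D * A) k j) ^ t)) := by
          refine Finset.sum_le_sum fun k _ => ?_
          rw [entry_interp hA C D ht0 ht1 k j,
            Real.mul_rpow (h0m m i k) (hB0 k j), Real.mul_rpow (h1m m i k) (hB1 k j)]
          have h := mul_le_mul_of_nonneg_right (ih i k)
            (mul_nonneg (Real.rpow_nonneg (hB0 k j) (1 - t)) (Real.rpow_nonneg (hB1 k j) t))
          calc ((expDiag (fun i => (1 - t) * C i + t * D i) * A) ^ m) i k *
                ((expDiag C * A) k j ^ (1 - t) * (expDiag D * A) k j ^ t)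
              ≤ (((expDiag C * A) ^ m) i k ^ (1 - t) * ((expDiag D * A) ^ m) i k ^ t) *
                ((expDiag C * A) k j ^ (1 - t) * (expDiag D * A) k j ^ t) := h
            _ = ((expDiag C * A) ^ m) i k ^ (1 - t) * (expDiag C * A) k j ^ (1 - t) *
                (((expDiag D * A) ^ m) i k ^ t * (expDiag D * A) k j ^ t) := by ring
      _ ≤ (∑ k, ((expDiag C * A) ^ m) i k * (expDiag C * A) k j) ^ (1 - t) *
            (∑ k, ((expDiag D * A) ^ m) i k * (expDiag D * A) k j) ^ t :=
          holder_sum Finset.univ ht0 ht1 _ _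
            (fun k _ => mul_nonneg (h0m m i k) (hB0 k j))
            (fun k _ => mul_nonneg (h1m m i k) (hB1 k j))

private lemma pow_entry_lower {A : Matrix (Fin n) (Fin n) ℝ} (hA : ∀ i j, 0 ≤ A i j)
    (E : Fin n → ℝ) {c : ℝ} (hc : 0 < c) (hcE : ∀ i, c ≤ Real.exp (E i)) (m : ℕ)
    (i j : Fin n) :
    c ^ m * (A ^ m) i j ≤ ((expDiag E * A) ^ m) i j := by
  induction m generalizing i j with
  | zero => simp
  | succ m ih =>
    rw [pow_succ A m, pow_succ (expDiag E * A) m, Matrix.mul_apply, Matrix.mul_apply,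
      Finset.mul_sum]
    refine Finset.sum_le_sum fun k _ => ?_
    have h1 : c ^ (m + 1) * ((A ^ m) i k * A k j) = (c ^ m * (A ^ m) i k) * (c * A k j) := by
      ring
    rw [h1]
    refine mul_le_mul (ih i k) ?_ (mul_nonneg hc.le (hA k j))
      (pow_entry_nonneg' (expDiag_mul_nonneg E hA) m i k)
    rw [expDiag_mul_apply]
    exact mul_le_mul_of_nonneg_right (hcE k) (hA k j)

private lemma norm_pow_le_interp {A : Matrix (Fin n) (Fin n) ℝ} (hA : ∀ i j, 0 ≤ A i j)
    (C D : Fin n → ℝ) {t : ℝ} (ht0 : 0 < t) (ht1 : t < 1) (m : ℕ) :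
    ‖(expDiag (fun i => (1 - t) * C i + t * D i) * A) ^ m‖ ≤
      ‖(expDiag C * A) ^ m‖ ^ (1 - t) * ‖(expDiag D * A) ^ m‖ ^ t := by
  have hB0 := expDiag_mul_nonneg C hA
  have hB1 := expDiag_mul_nonneg D hA
  have hBt := expDiag_mul_nonneg (fun i => (1 - t) * C i + t * D i) hA
  refine norm_le_of_rows (mul_nonneg (Real.rpow_nonneg (norm_nonneg _) _)
    (Real.rpow_nonneg (norm_nonneg _) _)) fun i => ?_
  have hrow0 : ∑ j, ((expDiag C * A) ^ m) i j ≤ ‖(expDiag C * A) ^ m‖ := by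
    calc ∑ j, ((expDiag C * A) ^ m) i j = ∑ j, ‖((expDiag C * A) ^ m) i j‖ :=
          Finset.sum_congr rfl fun j _ => (Real.norm_of_nonneg (pow_entry_nonneg' hB0 m i j)).symm
      _ ≤ _ := row_sum_le_norm _ i
  have hrow1 : ∑ j, ((expDiag D * A) ^ m) i j ≤ ‖(expDiag D * A) ^ m‖ := by
    calc ∑ j, ((expDiag D * A) ^ m) i j = ∑ j, ‖((expDiag D * A) ^ m) i j‖ :=
          Finset.sum_congr rfl fun j _ => (Real.norm_of_nonneg (pow_entry_nonneg' hB1 m i j)).symm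
      _ ≤ _ := row_sum_le_norm _ i
  calc ∑ j, ‖((expDiag (fun i => (1 - t) * C i + t * D i) * A) ^ m) i j‖
      = ∑ j, ((expDiag (fun i => (1 - t) * C i + t * D i) * A) ^ m) i j :=
        Finset.sum_congr rfl fun j _ => Real.norm_of_nonneg (pow_entry_nonneg' hBt m i j)
    _ ≤ ∑ j, (((expDiag C * A) ^ m) i j) ^ (1 - t) * (((expDiag D * A) ^ m) i j) ^ t :=
        Finset.sum_le_sum fun j _ => pow_entry_interp_le hA C D ht0 ht1 m i j
    _ ≤ (∑ j, ((expDiag C * A) ^ m) i j) ^ (1 - t) * (∑ j, ((expDiag D * A) ^ m) i j) ^ t :=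
        holder_sum Finset.univ ht0 ht1 _ _ (fun j _ => pow_entry_nonneg' hB0 m i j)
          (fun j _ => pow_entry_nonneg' hB1 m i j)
    _ ≤ ‖(expDiag C * A) ^ m‖ ^ (1 - t) * ‖(expDiag D * A) ^ m‖ ^ t := by
        refine mul_le_mul
          (Real.rpow_le_rpow (Finset.sum_nonneg fun j _ => pow_entry_nonneg' hB0 m i j) hrow0
            (by linarith))
          (Real.rpow_le_rpow (Finset.sum_nonneg fun j _ => pow_entry_nonneg' hB1 m i j) hrow1
            ht0.le)
          (Real.rpow_nonneg (Finset.sum_nonneg fun j _ => pow_entry_nonneg' hB1 m i j) _)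
          (Real.rpow_nonneg (norm_nonneg _) _)

private lemma norm_pow_lower [NeZero n] {A : Matrix (Fin n) (Fin n) ℝ}
    (hA : ∀ i j, 0 ≤ A i j) (E : Fin n → ℝ) {c : ℝ} (hc : 0 < c)
    (hcE : ∀ i, c ≤ Real.exp (E i)) (m : ℕ) :
    c ^ m * ‖A ^ m‖ ≤ ‖(expDiag E * A) ^ m‖ := by
  obtain ⟨i, -, hi⟩ := Finset.exists_mem_eq_sup Finset.univ Finset.univ_nonempty
    (fun i => ∑ j, ‖(A ^ m) i j‖₊)
  have hAm : ‖A ^ m‖ = ∑ j, ‖(A ^ m) i j‖ := by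
    rw [Matrix.linfty_opNorm_def, hi]
    push_cast
    rfl
  rw [hAm, Finset.mul_sum]
  calc ∑ j, c ^ m * ‖(A ^ m) i j‖ = ∑ j, c ^ m * (A ^ m) i j :=
        Finset.sum_congr rfl fun j _ => by rw [Real.norm_of_nonneg (pow_entry_nonneg' hA m i j)]
    _ ≤ ∑ j, ((expDiag E * A) ^ m) i j :=
        Finset.sum_le_sum fun j _ => pow_entry_lower hA E hc hcE m i j
    _ = ∑ j, ‖((expDiag E * A) ^ m) i j‖ :=
        Finset.sum_congr rfl fun j _ =>
          (Real.norm_of_nonneg (pow_entry_nonneg' (expDiag_mul_nonneg E hA) m i j)).symm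
    _ ≤ _ := row_sum_le_norm _ i

private lemma specRad_expDiag_pos [NeZero n] {A : Matrix (Fin n) (Fin n) ℝ}
    (hA : ∀ i j, 0 ≤ A i j) (hr : 0 < specRad A) (E : Fin n → ℝ) :
    0 < specRad (expDiag E * A) := by
  set c : ℝ := Finset.univ.inf' Finset.univ_nonempty (fun i => Real.exp (E i)) with hcdef
  have hc : 0 < c := by
    rw [hcdef, Finset.lt_inf'_iff]
    exact fun i _ => Real.exp_pos _
  have hcE : ∀ i, c ≤ Real.exp (E i) := fun i => Finset.inf'_le _ (Finset.mem_univ i)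
  have h1 := tendsto_gelfand A
  have h2 := tendsto_gelfand (expDiag E * A)
  rw [← specRad_eq] at h1 h2
  have key : specRad A * c ≤ specRad (expDiag E * A) := by
    refine le_of_tendsto_of_tendsto (h1.mul_const c) h2 ?_
    filter_upwards [eventually_ge_atTop 1] with m hm
    have hmne : (m : ℝ) ≠ 0 := Nat.cast_ne_zero.2 (by omega)
    calc ‖A ^ m‖ ^ (1 / (m : ℝ)) * c = (c ^ m * ‖A ^ m‖) ^ (1 / (m : ℝ)) := by
          rw [Real.mul_rpow (pow_nonneg hc.le m) (norm_nonneg _), ← Real.rpow_natCast c m,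
            ← Real.rpow_mul hc.le, mul_one_div_cancel hmne, Real.rpow_one]
          ring
      _ ≤ ‖(expDiag E * A) ^ m‖ ^ (1 / (m : ℝ)) :=
          Real.rpow_le_rpow (mul_nonneg (pow_nonneg hc.le m) (norm_nonneg _))
            (norm_pow_lower hA E hc hcE m) (by positivity)
  exact lt_of_lt_of_le (mul_pos hr hc) key

private lemma specRad_interp_le [NeZero n] {A : Matrix (Fin n) (Fin n) ℝ}
    (hA : ∀ i j, 0 ≤ A i j) (C D : Fin n → ℝ) {t : ℝ} (ht0 : 0 < t) (ht1 : t < 1) :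
    specRad (expDiag (fun i => (1 - t) * C i + t * D i) * A) ≤
      specRad (expDiag C * A) ^ (1 - t) * specRad (expDiag D * A) ^ t := by
  have h0 := tendsto_gelfand (expDiag C * A)
  have h1 := tendsto_gelfand (expDiag D * A)
  have ht := tendsto_gelfand (expDiag (fun i => (1 - t) * C i + t * D i) * A)
  rw [← specRad_eq] at h0 h1 ht
  refine le_of_tendsto_of_tendsto ht
    ((h0.rpow_const (Or.inr (by linarith))).mul (h1.rpow_const (Or.inr ht0.le))) ?_
  filter_upwards with m
  calc ‖(expDiag (fun i => (1 - t) * C i + t * D i) * A) ^ m‖ ^ (1 / (m : ℝ))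
      ≤ (‖(expDiag C * A) ^ m‖ ^ (1 - t) * ‖(expDiag D * A) ^ m‖ ^ t) ^ (1 / (m : ℝ)) :=
        Real.rpow_le_rpow (norm_nonneg _) (norm_pow_le_interp hA C D ht0 ht1 m) (by positivity)
    _ = (‖(expDiag C * A) ^ m‖ ^ (1 / (m : ℝ))) ^ (1 - t) *
          (‖(expDiag D * A) ^ m‖ ^ (1 / (m : ℝ))) ^ t := by
        rw [Real.mul_rpow (Real.rpow_nonneg (norm_nonneg _) _)
            (Real.rpow_nonneg (norm_nonneg _) _),
          ← Real.rpow_mul (norm_nonneg _), ← Real.rpow_mul (norm_nonneg _),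
          ← Real.rpow_mul (norm_nonneg _), ← Real.rpow_mul (norm_nonneg _),
          mul_comm (1 - t) (1 / (m : ℝ)), mul_comm t (1 / (m : ℝ))]

end AuxKingman

theorem stmt0 {n : ℕ} (A : Matrix (Fin n) (Fin n) ℝ)
    (hA : ∀ i j, 0 ≤ A i j) (hr : 0 < specRad A)
    (C D : Fin n → ℝ) (t : ℝ) (ht : t ∈ Set.Icc (0:ℝ) 1) :
    Real.log (specRad (expDiag (fun i => (1 - t) * C i + t * D i) * A)) ≤
      (1 - t) * Real.log (specRad (expDiag C * A)) +
        t * Real.log (specRad (expDiag D * A)) := by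
  obtain ⟨ht0, ht1⟩ := ht
  rcases Nat.eq_zero_or_pos n with hn | hn
  · exfalso
    subst hn
    have hempty : {x : ℝ | ∃ μ ∈ spectrum ℂ (A.map Complex.ofReal), x = ‖μ‖} = ∅ := by
      rw [Set.eq_empty_iff_forall_notMem]
      rintro x ⟨μ, hμ, -⟩
      rw [spectrum.mem_iff] at hμ
      exact hμ (isUnit_of_subsingleton _)
    have hz : specRad A = 0 := by rw [specRad, hempty, Real.sSup_empty]
    exact absurd (hz ▸ hr) (lt_irrefl 0)
  · haveI : NeZero n := ⟨hn.ne'⟩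
    rcases eq_or_lt_of_le ht0 with h0 | h0
    · have hfun : (fun i => (1 - t) * C i + t * D i) = C := by
        funext i; rw [← h0]; ring
      rw [hfun, ← h0]
      norm_num
    rcases eq_or_lt_of_le ht1 with h1 | h1
    · have hfun : (fun i => (1 - t) * C i + t * D i) = D := by
        funext i; rw [h1]; ring
      rw [hfun, h1]
      norm_num
    · have hr0 := specRad_expDiag_pos hA hr C
      have hr1 := specRad_expDiag_pos hA hr D
      have key := specRad_interp_le hA C D h0 h1
      have hrt := specRad_expDiag_pos hA hr (fun i => (1 - t) * C i + t * D i)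
      have hlog := Real.log_le_log hrt key
      rw [Real.log_mul (ne_of_gt (Real.rpow_pos_of_pos hr0 _))
        (ne_of_gt (Real.rpow_pos_of_pos hr1 _)), Real.log_rpow hr0, Real.log_rpow hr1] at hlog
      exact hlog
end

section
/- Let A be an n×n nonnegative real matrix with r(A) > 0 that is not irreducible (i.e. reducible). Then A does not have Property 1: there exist real diagonal matrices C and D such that C − D ≠ c·I for every real c, and yet log r(e^{(1−t)C + tD} A) = (1−t)·log r(e^{C} A) + t·log r(e^{D} A) for every t ∈ (0,1). -/
open Matrix

namespace SRAux

open Polynomial Pointwise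

variable {m : Type*} [Fintype m] [DecidableEq m]

/-- set of moduli of eigenvalues -/
def radSet (M : Matrix m m ℂ) : Set ℝ := {x : ℝ | ∃ μ ∈ spectrum ℂ M, x = ‖μ‖}

lemma mem_spec_iff (M : Matrix m m ℂ) (μ : ℂ) :
    μ ∈ spectrum ℂ M ↔ M.charpoly.eval μ = 0 := by
  rw [spectrum.mem_iff, Matrix.isUnit_iff_isUnit_det, isUnit_iff_ne_zero, not_ne_iff]
  have h : ((algebraMap ℂ (Matrix m m ℂ)) μ - M).det = M.charpoly.eval μ := by
    rw [Matrix.charpoly, ← Polynomial.coe_evalRingHom, RingHom.map_det]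
    congr 1
    ext i j
    by_cases hij : i = j <;>
      simp [hij, Matrix.charmatrix_apply, Matrix.algebraMap_matrix_apply,
        Matrix.diagonal_apply]
  rw [h]

lemma spec_finite (M : Matrix m m ℂ) : (spectrum ℂ M).Finite := by
  refine Set.Finite.subset
    (Polynomial.finite_setOf_isRoot (p := M.charpoly) (Matrix.charpoly_monic M).ne_zero) ?_
  intro μ hμ
  exact (mem_spec_iff M μ).1 hμ

lemma spec_nonempty [Nonempty m] (M : Matrix m m ℂ) : (spectrum ℂ M).Nonempty := by
  have hdeg : M.charpoly.degree ≠ 0 := by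
    rw [Matrix.charpoly_degree_eq_dim]
    exact_mod_cast Fintype.card_pos.ne'
  obtain ⟨μ, hμ⟩ := IsAlgClosed.exists_root M.charpoly hdeg
  exact ⟨μ, (mem_spec_iff M μ).2 hμ⟩

lemma radSet_eq (M : Matrix m m ℂ) : radSet M = (fun μ : ℂ => ‖μ‖) '' spectrum ℂ M := by
  ext x; simp [radSet, Set.mem_image, eq_comm]

lemma radSet_finite (M : Matrix m m ℂ) : (radSet M).Finite := by
  rw [radSet_eq]; exact (spec_finite M).image _

lemma radSet_nonempty [Nonempty m] (M : Matrix m m ℂ) : (radSet M).Nonempty := by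
  rw [radSet_eq]; exact (spec_nonempty M).image _

lemma isGreatest_radSet [Nonempty m] (M : Matrix m m ℂ) :
    IsGreatest (radSet M) (sSup (radSet M)) :=
  ⟨(radSet_nonempty M).csSup_mem (radSet_finite M),
    fun _ hx => le_csSup (radSet_finite M).bddAbove hx⟩

lemma cRad_nonneg [Nonempty m] (M : Matrix m m ℂ) : 0 ≤ sSup (radSet M) := by
  obtain ⟨⟨μ, _, h⟩, _⟩ := isGreatest_radSet M
  rw [h]; exact norm_nonneg μ

lemma cRad_smul [Nonempty m] (c : ℂ) (hc : c ≠ 0) (M : Matrix m m ℂ) :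
    sSup (radSet (c • M)) = ‖c‖ * sSup (radSet M) := by
  have hspec : spectrum ℂ (c • M) = (Units.mk0 c hc) • spectrum ℂ M :=
    spectrum.unit_smul_eq_smul M (Units.mk0 c hc)
  have hset : radSet (c • M) = (fun x => ‖c‖ * x) '' radSet M := by
    rw [radSet_eq, radSet_eq, hspec, ← Set.image_smul, Set.image_image, Set.image_image]
    ext μ; simp [Units.smul_def]
  rw [hset]
  refine IsGreatest.csSup_eq ?_
  obtain ⟨hmem, hub⟩ := isGreatest_radSet M
  constructor
  · exact ⟨_, hmem, rfl⟩
  · rintro y ⟨x, hx, rfl⟩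
    exact mul_le_mul_of_nonneg_left (hub hx) (norm_nonneg c)

variable {n : ℕ} (p : Fin n → Prop) [DecidablePred p]

/-- upper-left block -/
def blk₁ (B : Matrix (Fin n) (Fin n) ℂ) : Matrix {x // p x} {x // p x} ℂ :=
  B.submatrix Subtype.val Subtype.val

/-- lower-right block -/
def blk₂ (B : Matrix (Fin n) (Fin n) ℂ) : Matrix {x // ¬ p x} {x // ¬ p x} ℂ :=
  B.submatrix Subtype.val Subtype.val

lemma charpoly_decomp (B : Matrix (Fin n) (Fin n) ℂ)
    (hclosed : ∀ k l, p k → ¬ p l → B k l = 0) :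
    B.charpoly = (blk₁ p B).charpoly * (blk₂ p B).charpoly := by
  classical
  let e : {x // p x} ⊕ {x // ¬ p x} ≃ Fin n := Equiv.sumCompl p
  have h1 : B.submatrix e e =
      fromBlocks (blk₁ p B) 0 (B.submatrix (Subtype.val) (Subtype.val)) (blk₂ p B) := by
    ext i j
    rcases i with i | i <;> rcases j with j | j <;>
      simp [e, blk₁, blk₂, Matrix.fromBlocks, Matrix.submatrix_apply]
    exact hclosed i j i.2 j.2
  have h2 : (B.submatrix e e).charpoly = B.charpoly := by
    have : B.submatrix ⇑e ⇑e = reindex e.symm e.symm B := by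
      simp [Matrix.reindex_apply]
    rw [this, Matrix.charpoly_reindex]
  rw [← h2, h1, Matrix.charpoly_fromBlocks_zero₁₂]

lemma spec_decomp (B : Matrix (Fin n) (Fin n) ℂ)
    (hclosed : ∀ k l, p k → ¬ p l → B k l = 0) :
    spectrum ℂ B = spectrum ℂ (blk₁ p B) ∪ spectrum ℂ (blk₂ p B) := by
  ext μ
  simp only [Set.mem_union, mem_spec_iff, charpoly_decomp p B hclosed, eval_mul, mul_eq_zero]

lemma cRad_decomp [Nonempty {x // p x}] [Nonempty {x // ¬ p x}]
    (B : Matrix (Fin n) (Fin n) ℂ)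
    (hclosed : ∀ k l, p k → ¬ p l → B k l = 0) :
    sSup (radSet B) = max (sSup (radSet (blk₁ p B))) (sSup (radSet (blk₂ p B))) := by
  have hset : radSet B = radSet (blk₁ p B) ∪ radSet (blk₂ p B) := by
    rw [radSet_eq, radSet_eq, radSet_eq, spec_decomp p B hclosed, Set.image_union]
  rw [hset, csSup_union (radSet_finite _).bddAbove (radSet_nonempty _)
    (radSet_finite _).bddAbove (radSet_nonempty _)]

lemma key (A : Matrix (Fin n) (Fin n) ℝ)
    [Nonempty {x // p x}] [Nonempty {x // ¬ p x}]
    (hclosed : ∀ k l, p k → ¬ p l → A k l = 0) (a b : ℝ) :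
    specRad (expDiag (fun k => if p k then a else b) * A) =
      max (Real.exp a * sSup (radSet (blk₁ p (A.map Complex.ofReal))))
          (Real.exp b * sSup (radSet (blk₂ p (A.map Complex.ofReal)))) := by
  set w : Fin n → ℝ := fun k => if p k then a else b with hw
  set M : Matrix (Fin n) (Fin n) ℂ := (expDiag w * A).map Complex.ofReal with hM
  have hMentry : ∀ k l, M k l = Complex.ofReal (Real.exp (w k) * A k l) := by
    intro k l
    simp [hM, Matrix.map_apply, expDiag, Matrix.diagonal_mul]
  have hMclosed : ∀ k l, p k → ¬ p l → M k l = 0 := by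
    intro k l hk hl; rw [hMentry, hclosed k l hk hl]; simp
  have hspecRad : specRad (expDiag w * A) = sSup (radSet M) := rfl
  rw [hspecRad, cRad_decomp p M hMclosed]
  have h1 : blk₁ p M = (Complex.ofReal (Real.exp a)) • blk₁ p (A.map Complex.ofReal) := by
    ext i j
    have : w i.1 = a := if_pos i.2
    simp [blk₁, hMentry, this, Matrix.map_apply, Complex.ofReal_mul]
  have h2 : blk₂ p M = (Complex.ofReal (Real.exp b)) • blk₂ p (A.map Complex.ofReal) := by
    ext i j
    have : w i.1 = b := if_neg i.2
    simp [blk₂, hMentry, this, Matrix.map_apply, Complex.ofReal_mul]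
  rw [h1, h2, cRad_smul _ (by simp [Real.exp_ne_zero]) _,
    cRad_smul _ (by simp [Real.exp_ne_zero]) _]
  simp [Complex.norm_real, abs_of_pos (Real.exp_pos _)]

lemma main_con (A : Matrix (Fin n) (Fin n) ℝ) (hr : 0 < specRad A)
    [Nonempty {x // p x}] [Nonempty {x // ¬ p x}]
    (hclosed : ∀ k l, p k → ¬ p l → A k l = 0) :
    ∃ C D : Fin n → ℝ, (¬ ∃ c : ℝ, ∀ i, C i - D i = c) ∧
      ∀ t ∈ Set.Ioo (0:ℝ) 1,
        Real.log (specRad (expDiag (fun i => (1 - t) * C i + t * D i) * A)) =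
          (1 - t) * Real.log (specRad (expDiag C * A)) +
            t * Real.log (specRad (expDiag D * A)) := by
  classical
  set r₁ := sSup (radSet (blk₁ p (A.map Complex.ofReal))) with hr₁
  set r₂ := sSup (radSet (blk₂ p (A.map Complex.ofReal))) with hr₂
  have hr₁0 : 0 ≤ r₁ := cRad_nonneg _
  have hr₂0 : 0 ≤ r₂ := cRad_nonneg _
  have hA0 : specRad A = max r₁ r₂ := by
    have h := key p A hclosed 0 0
    have e1 : (fun k : Fin n => if p k then (0:ℝ) else 0) = fun _ => 0 := by
      funext k; simp
    rw [e1] at h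
    have e2 : expDiag (fun _ : Fin n => (0:ℝ)) = 1 := by
      simp [expDiag, Real.exp_zero]
    rw [e2, one_mul] at h
    simpa using h
  obtain ⟨k₀⟩ := ‹Nonempty {x // p x}›
  obtain ⟨k₁⟩ := ‹Nonempty {x // ¬ p x}›
  rcases le_total r₂ r₁ with hle | hle
  · -- the spectral radius lives on the p-block; scale the other block down
    have hrpos : 0 < r₁ := by rwa [hA0, max_eq_left hle] at hr
    refine ⟨(fun _ => 0), (fun k => if p k then 0 else -1), ?_, ?_⟩
    · rintro ⟨c, hc⟩
      have h0 := hc k₀.1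
      have h1 := hc k₁.1
      simp only [if_pos k₀.2, if_neg k₁.2] at h0 h1
      norm_num at h0 h1
      linarith
    · intro t ht
      have hcomp : ∀ s : ℝ, 0 ≤ s →
          specRad (expDiag (fun k => if p k then (0:ℝ) else -s) * A) = r₁ := by
        intro s hs
        rw [key p A hclosed 0 (-s), Real.exp_zero, one_mul]
        refine max_eq_left ?_
        calc Real.exp (-s) * r₂ ≤ 1 * r₂ :=
              mul_le_mul_of_nonneg_right (Real.exp_le_one_iff.mpr (by linarith)) hr₂0
          _ = r₂ := one_mul _
          _ ≤ r₁ := hle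
      have hC : specRad (expDiag (fun _ : Fin n => (0:ℝ)) * A) = r₁ := by
        have e : (fun _ : Fin n => (0:ℝ)) = fun k => if p k then (0:ℝ) else -(0:ℝ) := by
          funext k; simp
        rw [e, hcomp 0 le_rfl]
      have hD : specRad (expDiag (fun k : Fin n => if p k then (0:ℝ) else -1) * A) = r₁ := by
        have e : (fun k : Fin n => if p k then (0:ℝ) else -1)
            = fun k => if p k then (0:ℝ) else -(1:ℝ) := by norm_num
        rw [e, hcomp 1 zero_le_one]
      have hW : specRad (expDiag
          (fun i => (1 - t) * (fun _ : Fin n => (0:ℝ)) i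
            + t * (fun k => if p k then (0:ℝ) else -1) i) * A) = r₁ := by
        have e : (fun i => (1 - t) * (fun _ : Fin n => (0:ℝ)) i
            + t * (fun k => if p k then (0:ℝ) else -1) i)
            = fun k => if p k then (0:ℝ) else -t := by
          funext k; by_cases h : p k <;> simp [h] <;> ring
        rw [e, hcomp t (le_of_lt ht.1)]
      rw [hW, hC, hD]; ring
  · -- symmetric case: scale the p-block down
    have hrpos : 0 < r₂ := by rwa [hA0, max_eq_right hle] at hr
    refine ⟨(fun _ => 0), (fun k => if p k then -1 else 0), ?_, ?_⟩
    · rintro ⟨c, hc⟩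
      have h0 := hc k₀.1
      have h1 := hc k₁.1
      simp only [if_pos k₀.2, if_neg k₁.2] at h0 h1
      norm_num at h0 h1
      linarith
    · intro t ht
      have hcomp : ∀ s : ℝ, 0 ≤ s →
          specRad (expDiag (fun k => if p k then -s else (0:ℝ)) * A) = r₂ := by
        intro s hs
        rw [key p A hclosed (-s) 0, Real.exp_zero, one_mul]
        refine max_eq_right ?_
        calc Real.exp (-s) * r₁ ≤ 1 * r₁ :=
              mul_le_mul_of_nonneg_right (Real.exp_le_one_iff.mpr (by linarith)) hr₁0
          _ = r₁ := one_mul _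
          _ ≤ r₂ := hle
      have hC : specRad (expDiag (fun _ : Fin n => (0:ℝ)) * A) = r₂ := by
        have e : (fun _ : Fin n => (0:ℝ)) = fun k => if p k then -(0:ℝ) else (0:ℝ) := by
          funext k; simp
        rw [e, hcomp 0 le_rfl]
      have hD : specRad (expDiag (fun k : Fin n => if p k then (-1:ℝ) else 0) * A) = r₂ := by
        have e : (fun k : Fin n => if p k then (-1:ℝ) else 0)
            = fun k => if p k then -(1:ℝ) else (0:ℝ) := by norm_num
        rw [e, hcomp 1 zero_le_one]
      have hW : specRad (expDiag
          (fun i => (1 - t) * (fun _ : Fin n => (0:ℝ)) i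
            + t * (fun k => if p k then (-1:ℝ) else 0) i) * A) = r₂ := by
        have e : (fun i => (1 - t) * (fun _ : Fin n => (0:ℝ)) i
            + t * (fun k => if p k then (-1:ℝ) else 0) i)
            = fun k => if p k then -t else (0:ℝ) := by
          funext k; by_cases h : p k <;> simp [h] <;> ring
        rw [e, hcomp t (le_of_lt ht.1)]
      rw [hW, hC, hD]; ring

end SRAux

theorem stmt1 {n : ℕ} (A : Matrix (Fin n) (Fin n) ℝ)
    (hA : ∀ i j, 0 ≤ A i j) (hr : 0 < specRad A) (hred : ¬ MatIrred A) :
    ¬ Property1 A ∧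
      ∃ C D : Fin n → ℝ, (¬ ∃ c : ℝ, ∀ i, C i - D i = c) ∧
        ∀ t ∈ Set.Ioo (0:ℝ) 1,
          Real.log (specRad (expDiag (fun i => (1 - t) * C i + t * D i) * A)) =
            (1 - t) * Real.log (specRad (expDiag C * A)) +
              t * Real.log (specRad (expDiag D * A)) := by
  classical
  rw [MatIrred] at hred
  push_neg at hred
  obtain ⟨i, j, hij⟩ := hred
  have hpow : ∀ (m : ℕ) (k l : Fin n), 0 ≤ (A ^ m) k l := by
    intro m
    induction m with
    | zero =>
      intro k l
      by_cases h : k = l <;> simp [pow_zero, Matrix.one_apply, h]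
    | succ m ih =>
      intro k l
      rw [pow_succ, Matrix.mul_apply]
      exact Finset.sum_nonneg fun x _ => mul_nonneg (ih k x) (hA x l)
  have hmain : ∃ C D : Fin n → ℝ, (¬ ∃ c : ℝ, ∀ i, C i - D i = c) ∧
      ∀ t ∈ Set.Ioo (0:ℝ) 1,
        Real.log (specRad (expDiag (fun i => (1 - t) * C i + t * D i) * A)) =
          (1 - t) * Real.log (specRad (expDiag C * A)) +
            t * Real.log (specRad (expDiag D * A)) := by
    by_cases hS : ∃ k, ∃ m, 0 < m ∧ 0 < (A ^ m) i k
    · set p : Fin n → Prop := fun k => ∃ m, 0 < m ∧ 0 < (A ^ m) i k with hp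
      haveI : DecidablePred p := Classical.decPred p
      haveI : Nonempty {x // p x} := ⟨⟨hS.choose, hS.choose_spec⟩⟩
      haveI : Nonempty {x // ¬ p x} := by
        refine ⟨⟨j, ?_⟩⟩
        rintro ⟨m, hm, hpos⟩
        exact absurd hpos (not_lt.2 (hij m hm))
      refine SRAux.main_con p A hr ?_
      rintro k l ⟨m, hm, hk⟩ hl
      by_contra hne
      have hApos : 0 < A k l := lt_of_le_of_ne (hA k l) (Ne.symm hne)
      refine hl ⟨m + 1, Nat.succ_pos _, ?_⟩
      rw [pow_succ, Matrix.mul_apply]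
      have hle : (A ^ m) i k * A k l ≤ ∑ x, (A ^ m) i x * A x l :=
        Finset.single_le_sum (f := fun x => (A ^ m) i x * A x l)
          (fun x _ => mul_nonneg (hpow m i x) (hA x l)) (Finset.mem_univ k)
      exact lt_of_lt_of_le (mul_pos hk hApos) hle
    · have hrow : ∀ l, A i l = 0 := by
        intro l
        by_contra hne
        exact hS ⟨l, 1, one_pos, by
          rw [pow_one]; exact lt_of_le_of_ne (hA i l) (Ne.symm hne)⟩
      by_cases hn : ∃ k : Fin n, k ≠ i
      · set p : Fin n → Prop := fun k => k = i with hp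
        haveI : DecidablePred p := Classical.decPred p
        haveI : Nonempty {x // p x} := ⟨⟨i, rfl⟩⟩
        haveI : Nonempty {x // ¬ p x} := ⟨⟨hn.choose, hn.choose_spec⟩⟩
        refine SRAux.main_con p A hr ?_
        intro k l hk _
        have hk' : k = i := hk
        subst hk'
        exact hrow l
      · exfalso
        push_neg at hn
        have hAzero : A = 0 := by
          ext k l
          rw [hn k]
          exact hrow l
        rw [hAzero] at hr
        haveI : Nonempty (Fin n) := ⟨i⟩
        have hmap : (0 : Matrix (Fin n) (Fin n) ℝ).map Complex.ofReal = 0 := by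
          ext k l; simp
        have hspec : spectrum ℂ ((0 : Matrix (Fin n) (Fin n) ℝ).map Complex.ofReal)
            = {0} := by
          rw [hmap]; exact spectrum.zero_eq
        have : specRad (0 : Matrix (Fin n) (Fin n) ℝ) = 0 := by
          unfold specRad
          rw [hspec]
          have hset : {x : ℝ | ∃ μ ∈ ({0} : Set ℂ), x = ‖μ‖} = {0} := by
            ext x; simp
          rw [hset, csSup_singleton]
        rw [this] at hr
        exact lt_irrefl 0 hr
  obtain ⟨C, D, hCD, heq⟩ := hmain
  exact ⟨fun hP => hCD (hP C D (1/2) ⟨by norm_num, by norm_num⟩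
    (heq (1/2) ⟨by norm_num, by norm_num⟩)), C, D, hCD, heq⟩
end

section
/- Let A and B be n×n nonnegative irreducible real matrices. Then there exists t ∈ (0,1) with r(A^{(1−t)} ∘ B^{(t)}) = r(A)^{1−t} · r(B)^{t} if and only if there exists a diagonal matrix E with strictly positive diagonal entries such that B = (r(B)/r(A)) · E^{−1} A E; and in that case the equality r(A^{(1−t)} ∘ B^{(t)}) = r(A)^{1−t} · r(B)^{t} holds for all t ∈ [0,1]. -/
open Matrix

namespace PFAux
variable {n : ℕ}

lemma mem_spec_iff (M : Matrix (Fin n) (Fin n) ℂ) (μ : ℂ) :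
    μ ∈ spectrum ℂ M ↔ ∃ z, z ≠ 0 ∧ M.mulVec z = μ • z := by
  rw [spectrum.mem_iff]
  have halg : algebraMap ℂ (Matrix (Fin n) (Fin n) ℂ) μ = μ • 1 :=
    Algebra.algebraMap_eq_smul_one μ
  rw [halg]
  constructor
  · intro h
    have hdet : (μ • (1 : Matrix (Fin n) (Fin n) ℂ) - M).det = 0 := by
      by_contra hd
      exact h ((Matrix.isUnit_iff_isUnit_det _).2 (isUnit_iff_ne_zero.2 hd))
    obtain ⟨z, hz, hzz⟩ := (Matrix.exists_mulVec_eq_zero_iff).2 hdet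
    refine ⟨z, hz, ?_⟩
    have := hzz
    rw [Matrix.sub_mulVec, Matrix.smul_mulVec, Matrix.one_mulVec, sub_eq_zero] at this
    exact this.symm
  · rintro ⟨z, hz, hzz⟩
    intro hu
    have hdet : (μ • (1 : Matrix (Fin n) (Fin n) ℂ) - M).det ≠ 0 := by
      intro h0
      exact absurd ((Matrix.isUnit_iff_isUnit_det _).1 hu) (by simp [h0])
    have : (μ • (1 : Matrix (Fin n) (Fin n) ℂ) - M).mulVec z = 0 := by
      rw [Matrix.sub_mulVec, Matrix.smul_mulVec, Matrix.one_mulVec, hzz, sub_self]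
    exact hdet (Matrix.exists_mulVec_eq_zero_iff.1 ⟨z, hz, this⟩)

lemma isGreatest_spec {hn : 0 < n} (M : Matrix (Fin n) (Fin n) ℝ)
    (hM : ∀ i j, 0 ≤ M i j) (v : Fin n → ℝ) (hv : ∀ i, 0 < v i) (r : ℝ)
    (heig : M.mulVec v = r • v) :
    IsGreatest {x : ℝ | ∃ μ ∈ spectrum ℂ (M.map Complex.ofReal), x = ‖μ‖} r := by
  have i0 : Fin n := ⟨0, hn⟩
  have heig' : ∀ i, ∑ j, M i j * v j = r * v i := by
    intro i
    have := congrFun heig i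
    simpa [Matrix.mulVec, dotProduct] using this
  have hr0 : 0 ≤ r := by
    have h1 : 0 ≤ ∑ j, M i0 j * v j :=
      Finset.sum_nonneg fun j _ => mul_nonneg (hM _ _) (hv j).le
    rw [heig' i0] at h1
    nlinarith [hv i0]
  constructor
  · refine ⟨(r : ℂ), ?_, by simp [abs_of_nonneg hr0]⟩
    rw [mem_spec_iff]
    refine ⟨fun i => (v i : ℂ), ?_, ?_⟩
    · intro h
      have := congrFun h i0
      simp only [Pi.zero_apply, Complex.ofReal_eq_zero] at this
      exact (hv i0).ne' this
    · funext i
      simp only [Matrix.mulVec, dotProduct, Matrix.map_apply, Pi.smul_apply,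
        smul_eq_mul]
      push_cast
      exact_mod_cast congrArg Complex.ofReal (heig' i)
  · rintro x ⟨μ, hμ, rfl⟩
    rw [mem_spec_iff] at hμ
    obtain ⟨z, hz, hzeq⟩ := hμ
    set w : Fin n → ℝ := fun i => ‖z i‖ with hw
    have hkey : ∀ i, ‖μ‖ * w i ≤ ∑ j, M i j * w j := by
      intro i
      have h1 : μ * z i = ∑ j, (M i j : ℂ) * z j := by
        have := congrFun hzeq i
        simp only [Matrix.mulVec, dotProduct, Matrix.map_apply, Pi.smul_apply,
          smul_eq_mul] at this
        exact this.symm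
      calc ‖μ‖ * w i = ‖μ * z i‖ := by simp [hw]
        _ = ‖∑ j, (M i j : ℂ) * z j‖ := by rw [h1]
        _ ≤ ∑ j, ‖(M i j : ℂ) * z j‖ := norm_sum_le _ _
        _ = ∑ j, M i j * w j := by
            refine Finset.sum_congr rfl fun j _ => ?_
            simp [hw, abs_of_nonneg (hM i j)]
    obtain ⟨i1, -, hi1⟩ := Finset.exists_max_image Finset.univ (fun i => w i / v i)
      ⟨i0, Finset.mem_univ _⟩
    have hwle : ∀ j, w j ≤ w i1 / v i1 * v j := by
      intro j
      have := hi1 j (Finset.mem_univ j)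
      rw [div_le_div_iff₀ (hv j) (hv i1)] at this
      rw [div_mul_eq_mul_div, le_div_iff₀ (hv i1)]
      linarith
    have hwpos : 0 < w i1 := by
      obtain ⟨j, hj⟩ := Function.ne_iff.1 hz
      have hwj : 0 < w j := by simpa [hw] using norm_pos_iff.mpr hj
      have := hwle j
      by_contra hcon
      push_neg at hcon
      have hq : w i1 / v i1 ≤ 0 := div_nonpos_of_nonpos_of_nonneg hcon (hv i1).le
      have : w i1 / v i1 * v j ≤ 0 := mul_nonpos_iff.2 (Or.inr ⟨hq, (hv j).le⟩)
      linarith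
    have hchain : ‖μ‖ * w i1 ≤ r * w i1 := by
      calc ‖μ‖ * w i1 ≤ ∑ j, M i1 j * w j := hkey i1
        _ ≤ ∑ j, M i1 j * (w i1 / v i1 * v j) :=
            Finset.sum_le_sum fun j _ => mul_le_mul_of_nonneg_left (hwle j) (hM _ _)
        _ = w i1 / v i1 * ∑ j, M i1 j * v j := by rw [Finset.mul_sum]; congr 1; ext j; ring
        _ = w i1 / v i1 * (r * v i1) := by rw [heig' i1]
        _ = r * w i1 := by
            have hne : v i1 ≠ 0 := (hv i1).ne'
            field_simp
    exact le_of_mul_le_mul_right hchain hwpos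

lemma specRad_eq {hn : 0 < n} (M : Matrix (Fin n) (Fin n) ℝ)
    (hM : ∀ i j, 0 ≤ M i j) (v : Fin n → ℝ) (hv : ∀ i, 0 < v i) (r : ℝ)
    (heig : M.mulVec v = r • v) : specRad M = r :=
  (isGreatest_spec (hn := hn) M hM v hv r heig).csSup_eq

/-- there is a spectrum element attaining the spectral radius -/
lemma exists_attain {hn : 0 < n} (M : Matrix (Fin n) (Fin n) ℝ) :
    ∃ μ ∈ spectrum ℂ (M.map Complex.ofReal), ‖μ‖ = specRad M := by
  have : Nonempty (Fin n) := ⟨⟨0, hn⟩⟩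
  have hne : (spectrum ℂ (M.map Complex.ofReal)).Nonempty :=
    spectrum.nonempty_of_isAlgClosed_of_finiteDimensional ℂ _
  have hS : {x : ℝ | ∃ μ ∈ spectrum ℂ (M.map Complex.ofReal), x = ‖μ‖}
      = (fun μ : ℂ => ‖μ‖) '' spectrum ℂ (M.map Complex.ofReal) := by
    ext x; simp [eq_comm, Set.mem_image]
  have hfin : ({x : ℝ | ∃ μ ∈ spectrum ℂ (M.map Complex.ofReal), x = ‖μ‖}).Finite := by
    rw [hS]; exact (Matrix.finite_spectrum _).image _
  have hne' : ({x : ℝ | ∃ μ ∈ spectrum ℂ (M.map Complex.ofReal), x = ‖μ‖}).Nonempty := by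
    obtain ⟨μ, hμ⟩ := hne; exact ⟨‖μ‖, μ, hμ, rfl⟩
  have := hne'.csSup_mem hfin
  obtain ⟨μ, hμ, hμ2⟩ := this
  exact ⟨μ, hμ, hμ2.symm⟩

lemma pow_entry_nonneg (A : Matrix (Fin n) (Fin n) ℝ) (hA : ∀ i j, 0 ≤ A i j) :
    ∀ m i j, 0 ≤ (A ^ m) i j := by
  intro m
  induction m with
  | zero => intro i j; simp [Matrix.one_apply]; split <;> norm_num
  | succ m ih =>
      intro i j
      rw [pow_succ, Matrix.mul_apply]
      exact Finset.sum_nonneg fun k _ => mul_nonneg (ih i k) (hA k j)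

lemma row_ex_pos (A : Matrix (Fin n) (Fin n) ℝ) (hA : ∀ i j, 0 ≤ A i j)
    (hAirr : MatIrred A) (i : Fin n) : ∃ k, 0 < A i k := by
  obtain ⟨m, hm, hpos⟩ := hAirr i i
  obtain ⟨m', rfl⟩ : ∃ m', m = m' + 1 := ⟨m - 1, by omega⟩
  rw [pow_succ', Matrix.mul_apply] at hpos
  by_contra hcon
  push_neg at hcon
  have : ∀ k ∈ Finset.univ, A i k * (A ^ m') k i = 0 := fun k _ => by
    have h1 : A i k = 0 := le_antisymm (hcon k) (hA i k)
    rw [h1, zero_mul]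
  rw [Finset.sum_eq_zero this] at hpos
  exact lt_irrefl 0 hpos

lemma oneAdd_nonneg (A : Matrix (Fin n) (Fin n) ℝ) (hA : ∀ i j, 0 ≤ A i j) :
    ∀ i j, 0 ≤ (1 + A) i j := by
  intro i j
  rw [Matrix.add_apply]
  refine add_nonneg ?_ (hA i j)
  rw [Matrix.one_apply]; split <;> norm_num

lemma oneAdd_pow_diag (A : Matrix (Fin n) (Fin n) ℝ) (hA : ∀ i j, 0 ≤ A i j) :
    ∀ (m : ℕ) (j : Fin n), 1 ≤ ((1 + A) ^ m) j j := by
  intro m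
  induction m with
  | zero => intro j; simp [Matrix.one_apply]
  | succ m ih =>
      intro j
      rw [pow_succ, Matrix.mul_apply]
      have h1 : (1:ℝ) * 1 ≤ ((1 + A) ^ m) j j * (1 + A) j j := by
        refine mul_le_mul (ih j) ?_ (by norm_num) (by linarith [ih j])
        rw [Matrix.add_apply, Matrix.one_apply_eq]
        linarith [hA j j]
      calc (1:ℝ) = 1 * 1 := by ring
        _ ≤ ((1 + A) ^ m) j j * (1 + A) j j := h1
        _ ≤ ∑ k, ((1 + A) ^ m) j k * (1 + A) k j := by
            refine Finset.single_le_sum (f := fun k => ((1 + A) ^ m) j k * (1 + A) k j)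
              (fun k _ => mul_nonneg ?_ ?_) (Finset.mem_univ j)
            · exact pow_entry_nonneg _ (oneAdd_nonneg A hA) m j k
            · exact oneAdd_nonneg A hA k j

lemma pow_le_oneAdd_pow (A : Matrix (Fin n) (Fin n) ℝ) (hA : ∀ i j, 0 ≤ A i j) :
    ∀ (m : ℕ) (i j : Fin n), (A ^ m) i j ≤ ((1 + A) ^ m) i j := by
  intro m
  induction m with
  | zero => intro i j; simp
  | succ m ih =>
      intro i j
      rw [pow_succ, pow_succ, Matrix.mul_apply, Matrix.mul_apply]
      refine Finset.sum_le_sum fun k _ => ?_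
      refine mul_le_mul (ih i k) ?_ (hA k j) ?_
      · rw [Matrix.add_apply, Matrix.one_apply]
        split <;> linarith [hA k j]
      · exact pow_entry_nonneg _ (oneAdd_nonneg A hA) m i k

lemma oneAdd_pow_mono (A : Matrix (Fin n) (Fin n) ℝ) (hA : ∀ i j, 0 ≤ A i j)
    {m N : ℕ} (hmN : m ≤ N) : ∀ i j, ((1 + A) ^ m) i j ≤ ((1 + A) ^ N) i j := by
  intro i j
  have : (1 + A) ^ N = (1 + A) ^ m * (1 + A) ^ (N - m) := by
    rw [← pow_add]; congr 1; omega
  rw [this, Matrix.mul_apply]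
  calc ((1 + A) ^ m) i j = ((1 + A) ^ m) i j * 1 := by ring
    _ ≤ ((1 + A) ^ m) i j * ((1 + A) ^ (N - m)) j j := by
        refine mul_le_mul_of_nonneg_left (oneAdd_pow_diag A hA _ j) ?_
        exact pow_entry_nonneg _ (oneAdd_nonneg A hA) m i j
    _ ≤ ∑ k, ((1 + A) ^ m) i k * ((1 + A) ^ (N - m)) k j := by
        refine Finset.single_le_sum (f := fun k => ((1 + A) ^ m) i k * ((1 + A) ^ (N - m)) k j)
          (fun k _ => mul_nonneg ?_ ?_) (Finset.mem_univ j)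
        · exact pow_entry_nonneg _ (oneAdd_nonneg A hA) m i k
        · exact pow_entry_nonneg _ (oneAdd_nonneg A hA) _ k j

lemma exists_P (A : Matrix (Fin n) (Fin n) ℝ) (hA : ∀ i j, 0 ≤ A i j)
    (hAirr : MatIrred A) : ∃ N : ℕ, ∀ i j, 0 < ((1 + A) ^ N) i j := by
  classical
  refine ⟨Finset.univ.sup (fun p : Fin n × Fin n => (hAirr p.1 p.2).choose), fun i j => ?_⟩
  set N := Finset.univ.sup (fun p : Fin n × Fin n => (hAirr p.1 p.2).choose)
  obtain ⟨hm, hpos⟩ := (hAirr i j).choose_spec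
  have hmN : (hAirr i j).choose ≤ N :=
    Finset.le_sup (f := fun p : Fin n × Fin n => (hAirr p.1 p.2).choose)
      (Finset.mem_univ (i, j))
  calc (0:ℝ) < (A ^ (hAirr i j).choose) i j := hpos
    _ ≤ ((1 + A) ^ (hAirr i j).choose) i j := pow_le_oneAdd_pow A hA _ i j
    _ ≤ ((1 + A) ^ N) i j := oneAdd_pow_mono A hA hmN i j

lemma mulVec_pos (P : Matrix (Fin n) (Fin n) ℝ) (hP : ∀ i j, 0 < P i j)
    (w : Fin n → ℝ) (hw : ∀ i, 0 ≤ w i) (hw0 : w ≠ 0) :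
    ∀ i, 0 < P.mulVec w i := by
  intro i
  obtain ⟨j0, hj0⟩ := Function.ne_iff.1 hw0
  have hj0' : 0 < w j0 := lt_of_le_of_ne (hw j0) (Ne.symm hj0)
  rw [Matrix.mulVec, dotProduct]
  exact Finset.sum_pos' (fun k _ => mul_nonneg (hP i k).le (hw k))
    ⟨j0, Finset.mem_univ _, mul_pos (hP i j0) hj0'⟩

lemma perron {hn : 0 < n} (A : Matrix (Fin n) (Fin n) ℝ) (hA : ∀ i j, 0 ≤ A i j)
    (hAirr : MatIrred A) :
    ∃ v : Fin n → ℝ, (∀ i, 0 < v i) ∧ A.mulVec v = specRad A • v ∧ 0 < specRad A := by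
  classical
  have i0 : Fin n := ⟨0, hn⟩
  obtain ⟨N, hP⟩ := exists_P A hA hAirr
  set P := (1 + A) ^ N with hPdef
  set Δ := stdSimplex ℝ (Fin n) with hΔ
  set Mbd : ℝ := ∑ i, ∑ j, A i j with hMbd
  -- the feasibility predicate
  set q : ℝ × (Fin n → ℝ) → Prop := fun p => ∀ i, p.1 * p.2 i ≤ A.mulVec p.2 i with hq
  set K : Set (ℝ × (Fin n → ℝ)) := (Set.Icc 0 Mbd ×ˢ Δ) ∩ {p | q p} with hK
  set T : Set ℝ := Prod.fst '' K with hT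
  have hbd_of : ∀ ρ : ℝ, ∀ v ∈ Δ, (∀ i, ρ * v i ≤ A.mulVec v i) → ρ ≤ Mbd := by
    intro ρ v hv hineq
    have hv1 : ∀ x, 0 ≤ v x := hv.1
    have hv2 : ∑ x, v x = 1 := hv.2
    have hvle : ∀ j, v j ≤ 1 := by
      intro j
      rw [← hv2]
      exact Finset.single_le_sum (fun k _ => hv1 k) (Finset.mem_univ j)
    calc ρ = ∑ i, ρ * v i := by rw [← Finset.mul_sum, hv2, mul_one]
      _ ≤ ∑ i, A.mulVec v i := Finset.sum_le_sum fun i _ => hineq i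
      _ = ∑ i, ∑ j, A i j * v j := rfl
      _ ≤ ∑ i, ∑ j, A i j := by
          refine Finset.sum_le_sum fun i _ => Finset.sum_le_sum fun j _ => ?_
          calc A i j * v j ≤ A i j * 1 := mul_le_mul_of_nonneg_left (hvle j) (hA i j)
            _ = A i j := mul_one _
  have hKne : K.Nonempty := by
    refine ⟨(0, fun _ => (n : ℝ)⁻¹), ⟨⟨le_refl 0, ?_⟩, ?_⟩, ?_⟩
    · exact Finset.sum_nonneg fun i _ => Finset.sum_nonneg fun j _ => hA i j
    · constructor
      · intro x
        exact inv_nonneg.2 (Nat.cast_nonneg n)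
      · rw [Finset.sum_const, Finset.card_univ, Fintype.card_fin, nsmul_eq_mul,
          mul_inv_cancel₀ (by exact_mod_cast hn.ne' : (n:ℝ) ≠ 0)]
    · intro i
      simp only [zero_mul, Matrix.mulVec, dotProduct]
      exact Finset.sum_nonneg fun j _ => mul_nonneg (hA i j) (inv_nonneg.2 (Nat.cast_nonneg n))
  have hKcomp : IsCompact K := by
    refine ((isCompact_Icc).prod (isCompact_stdSimplex _ _)).inter_right ?_
    have : {p : ℝ × (Fin n → ℝ) | q p} = ⋂ i, {p : ℝ × (Fin n → ℝ) | p.1 * p.2 i ≤ A.mulVec p.2 i} := by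
      ext p; simp [hq, Set.mem_iInter]
    rw [this]
    refine isClosed_iInter fun i => isClosed_le ?_ ?_
    · exact continuous_fst.mul ((continuous_apply i).comp continuous_snd)
    · show Continuous fun p : ℝ × (Fin n → ℝ) => ∑ j, A i j * p.2 j
      exact continuous_finset_sum _ fun j _ =>
        continuous_const.mul ((continuous_apply j).comp continuous_snd)
  have hTcomp : IsCompact T := hKcomp.image continuous_fst
  have hTne : T.Nonempty := hKne.image _
  set r := sSup T with hr
  have hrT : r ∈ T := hTcomp.sSup_mem hTne
  obtain ⟨⟨ρ, v⟩, hpK, hfst⟩ := hrT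
  obtain ⟨⟨hρIcc, hvΔ⟩, hineq⟩ := hpK
  have hρr : ρ = r := hfst
  have hρ0 : 0 ≤ ρ := hρIcc.1
  have hv1 : ∀ x, 0 ≤ v x := hvΔ.1
  have hv2 : ∑ x, v x = 1 := hvΔ.2
  have hvne : v ≠ 0 := by
    intro h0
    rw [h0] at hv2
    simp at hv2
  have hineq' : ∀ i, ρ * v i ≤ A.mulVec v i := hineq
  have hTub : ∀ x ∈ T, x ≤ Mbd := by
    rintro x ⟨⟨x', w⟩, ⟨⟨hIcc, hwΔ⟩, hqw⟩, rfl⟩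
    exact hbd_of x' w hwΔ hqw
  -- key claim : A v = ρ v
  have heig : A.mulVec v = ρ • v := by
    by_contra hne
    have hstrict : ∃ i, ρ * v i < A.mulVec v i := by
      by_contra hcon
      push_neg at hcon
      apply hne
      funext i
      simp only [Pi.smul_apply, smul_eq_mul]
      exact le_antisymm (hcon i) (hineq' i)
    set u := P.mulVec v with hu
    have hupos : ∀ i, 0 < u i := mulVec_pos P hP v hv1 hvne
    set g : Fin n → ℝ := fun i => A.mulVec v i - ρ * v i with hg
    have hgnn : ∀ i, 0 ≤ g i := fun i => sub_nonneg.2 (hineq' i)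
    have hgne : g ≠ 0 := by
      obtain ⟨i, hi⟩ := hstrict
      intro h0
      have := congrFun h0 i
      simp only [hg, Pi.zero_apply] at this
      linarith
    have hPg : ∀ i, 0 < P.mulVec g i := mulVec_pos P hP g hgnn hgne
    have hcomm : A * P = P * A := by
      have h1 : Commute A (1 + A) := (Commute.one_right A).add_right (Commute.refl A)
      exact (h1.pow_right N).eq
    have hPg_eq : P.mulVec g = fun i => A.mulVec u i - ρ * u i := by
      funext i
      have h1 : P.mulVec g = P.mulVec (A.mulVec v) - ρ • P.mulVec v := by
        have hgg : g = A.mulVec v - ρ • v := by funext k; simp [hg]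
        rw [hgg, Matrix.mulVec_sub, Matrix.mulVec_smul]
      have h2 : P.mulVec (A.mulVec v) = A.mulVec u := by
        rw [hu, Matrix.mulVec_mulVec, Matrix.mulVec_mulVec, hcomm]
      rw [h1, h2]
      simp [hu]
    have hstrict' : ∀ i, ρ * u i < A.mulVec u i := by
      intro i
      have h3 := hPg i
      rw [hPg_eq] at h3
      have h4 : 0 < (A *ᵥ u) i - ρ * u i := h3
      linarith
    have hnemp : (Finset.univ : Finset (Fin n)).Nonempty := ⟨i0, Finset.mem_univ _⟩
    set ε := Finset.univ.inf' hnemp (fun i => (A.mulVec u i - ρ * u i) / u i) with hε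
    have hεpos : 0 < ε := by
      rw [hε, Finset.lt_inf'_iff]
      intro i _
      exact div_pos (by linarith [hstrict' i]) (hupos i)
    have hεle : ∀ i, (ρ + ε) * u i ≤ A.mulVec u i := by
      intro i
      have h1 : ε ≤ (A.mulVec u i - ρ * u i) / u i :=
        Finset.inf'_le _ (Finset.mem_univ i)
      rw [le_div_iff₀ (hupos i)] at h1
      linarith
    set su := ∑ i, u i with hsu
    have hsupos : 0 < su := Finset.sum_pos (fun i _ => hupos i) hnemp
    have hsimplex : su⁻¹ • u ∈ Δ := by
      constructor
      · intro x
        simp only [Pi.smul_apply, smul_eq_mul]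
        exact mul_nonneg (inv_nonneg.2 hsupos.le) (hupos x).le
      · simp only [Pi.smul_apply, smul_eq_mul, ← Finset.mul_sum]
        rw [← hsu, inv_mul_cancel₀ hsupos.ne']
    have hconstraint : ∀ i, (ρ + ε) * (su⁻¹ • u) i ≤ A.mulVec (su⁻¹ • u) i := by
      intro i
      simp only [Pi.smul_apply, smul_eq_mul, Matrix.mulVec_smul]
      have h5 := hεle i
      calc (ρ + ε) * (su⁻¹ * u i) = su⁻¹ * ((ρ + ε) * u i) := by ring
        _ ≤ su⁻¹ * A.mulVec u i :=
            mul_le_mul_of_nonneg_left h5 (inv_nonneg.2 hsupos.le)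
        _ = (su⁻¹ • A.mulVec u) i := by simp
    have hnew : ρ + ε ∈ T := by
      refine ⟨(ρ + ε, su⁻¹ • u), ⟨⟨⟨by linarith, ?_⟩, hsimplex⟩, hconstraint⟩, rfl⟩
      exact hbd_of (ρ + ε) (su⁻¹ • u) hsimplex hconstraint
    have hcontra : ρ + ε ≤ r := le_csSup ⟨Mbd, fun x hx => hTub x hx⟩ hnew
    rw [← hρr] at hcontra
    linarith
  -- positivity of v
  have hAv : ∀ k : ℕ, ((1 + A) ^ k).mulVec v = ((1 + ρ) ^ k) • v := by
    intro k
    induction k with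
    | zero => simp
    | succ k ih =>
        have h1 : (1 + A).mulVec v = (1 + ρ) • v := by
          rw [Matrix.add_mulVec, Matrix.one_mulVec, heig]
          funext i
          simp only [Pi.add_apply, Pi.smul_apply, smul_eq_mul]
          ring
        rw [pow_succ, ← Matrix.mulVec_mulVec, h1, Matrix.mulVec_smul, ih,
          smul_smul, pow_succ]
        congr 1
        ring
  have hvpos : ∀ i, 0 < v i := by
    have hPv : ∀ i, 0 < P.mulVec v i := mulVec_pos P hP v hv1 hvne
    intro i
    have h6 := hPv i
    rw [hPdef, hAv N] at h6
    simp only [Pi.smul_apply, smul_eq_mul] at h6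
    have hc : 0 < (1 + ρ) ^ N := pow_pos (by linarith) N
    nlinarith
  have hρpos : 0 < ρ := by
    obtain ⟨k, hk⟩ := row_ex_pos A hA hAirr i0
    have h1 : 0 < A.mulVec v i0 := by
      rw [Matrix.mulVec, dotProduct]
      exact Finset.sum_pos' (fun j _ => mul_nonneg (hA i0 j) (hv1 j))
        ⟨k, Finset.mem_univ _, mul_pos hk (hvpos k)⟩
    rw [heig] at h1
    simp only [Pi.smul_apply, smul_eq_mul] at h1
    nlinarith [hvpos i0]
  have hspec : specRad A = ρ := specRad_eq (hn := hn) A hA v hvpos ρ heig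
  exact ⟨v, hvpos, by rw [hspec]; exact heig, by rw [hspec]; exact hρpos⟩

lemma amgm {t a b : ℝ} (ht : 0 < t) (ht1 : t < 1) (ha : 0 ≤ a) (hb : 0 ≤ b) :
    a ^ (1 - t) * b ^ t ≤ (1 - t) * a + t * b :=
  Real.geom_mean_le_arith_mean2_weighted (by linarith) ht.le ha hb (by ring)

lemma amgm_eq {t a b : ℝ} (ht : 0 < t) (ht1 : t < 1) (ha : 0 ≤ a) (hb : 0 ≤ b)
    (h : a ^ (1 - t) * b ^ t = (1 - t) * a + t * b) : a = b := by
  by_contra hne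
  rcases eq_or_lt_of_le ha with ha0 | ha0
  · -- a = 0
    have hb0 : 0 < b := lt_of_le_of_ne hb (by intro h0; exact hne (ha0.symm.trans h0))
    rw [← ha0, Real.zero_rpow (by linarith : (1:ℝ) - t ≠ 0), zero_mul] at h
    nlinarith
  rcases eq_or_lt_of_le hb with hb0 | hb0
  · rw [← hb0, Real.zero_rpow ht.ne', mul_zero] at h
    nlinarith
  -- both positive
  have hmem : ∀ x : ℝ, 0 < x → x ∈ Set.Ioi (0:ℝ) := fun x hx => hx
  have hstrict := strictConcaveOn_log_Ioi.2 (hmem a ha0) (hmem b hb0) hne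
    (by linarith : (0:ℝ) < 1 - t) ht (by ring)
  simp only [smul_eq_mul] at hstrict
  have hlog : Real.log (a ^ (1 - t) * b ^ t) = (1 - t) * Real.log a + t * Real.log b := by
    rw [Real.log_mul (by positivity) (by positivity), Real.log_rpow ha0, Real.log_rpow hb0]
  rw [h] at hlog
  linarith [hlog, hstrict]

/-- Core equality-case lemma for row-stochastic matrices. -/
lemma stoch_eq (A B : Matrix (Fin n) (Fin n) ℝ) (hA : ∀ i j, 0 ≤ A i j)
    (hB : ∀ i j, 0 ≤ B i j)
    (hra : ∀ i, ∑ j, A i j = 1) (hrb : ∀ i, ∑ j, B i j = 1)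
    (hn : 0 < n) (hirr : MatIrred A) (t : ℝ) (ht : 0 < t) (ht1 : t < 1)
    (μ : ℂ) (hμ : ‖μ‖ = 1) (z : Fin n → ℂ) (hz : z ≠ 0)
    (heig : ((Matrix.of fun i j => A i j ^ (1 - t) * B i j ^ t).map Complex.ofReal).mulVec z
      = μ • z) :
    A = B := by
  classical
  set C : Matrix (Fin n) (Fin n) ℝ := Matrix.of fun i j => A i j ^ (1 - t) * B i j ^ t with hC
  have hCapp : ∀ i j, C i j = A i j ^ (1 - t) * B i j ^ t := fun i j => rfl
  have hCnn : ∀ i j, 0 ≤ C i j := fun i j => by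
    rw [hCapp]
    exact mul_nonneg (Real.rpow_nonneg (hA i j) _) (Real.rpow_nonneg (hB i j) _)
  have hCle : ∀ i j, C i j ≤ (1 - t) * A i j + t * B i j := fun i j =>
    amgm ht ht1 (hA i j) (hB i j)
  have hrowle : ∀ i, ∑ j, C i j ≤ 1 := by
    intro i
    calc ∑ j, C i j ≤ ∑ j, ((1 - t) * A i j + t * B i j) :=
          Finset.sum_le_sum fun j _ => hCle i j
      _ = (1 - t) * ∑ j, A i j + t * ∑ j, B i j := by
          rw [Finset.sum_add_distrib, Finset.mul_sum, Finset.mul_sum]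
      _ = 1 := by rw [hra i, hrb i]; ring
  set w : Fin n → ℝ := fun i => ‖z i‖ with hw
  have hwnn : ∀ i, 0 ≤ w i := fun i => norm_nonneg _
  have hsub : ∀ i, w i ≤ ∑ j, C i j * w j := by
    intro i
    have h1 : μ * z i = ∑ j, (C i j : ℂ) * z j := by
      have := congrFun heig i
      simp only [Matrix.mulVec, dotProduct, Matrix.map_apply, Pi.smul_apply,
        smul_eq_mul] at this
      exact this.symm
    calc w i = ‖μ‖ * w i := by rw [hμ, one_mul]
      _ = ‖μ * z i‖ := by simp [hw]
      _ = ‖∑ j, (C i j : ℂ) * z j‖ := by rw [h1]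
      _ ≤ ∑ j, ‖(C i j : ℂ) * z j‖ := norm_sum_le _ _
      _ = ∑ j, C i j * w j := by
          refine Finset.sum_congr rfl fun j _ => ?_
          simp [hw, abs_of_nonneg (hCnn i j)]
  obtain ⟨i0, -, hi0⟩ := Finset.exists_max_image Finset.univ w ⟨⟨0, hn⟩, Finset.mem_univ _⟩
  have hi0' : ∀ j, w j ≤ w i0 := fun j => hi0 j (Finset.mem_univ j)
  have hwpos : 0 < w i0 := by
    obtain ⟨j, hj⟩ := Function.ne_iff.1 hz
    have : 0 < w j := by simpa [hw] using norm_pos_iff.mpr hj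
    linarith [hi0' j]
  -- the key local argument at any index of maximal weight
  have hkey : ∀ i, w i = w i0 →
      (∀ j, A i j = B i j) ∧ ∀ j, 0 < A i j → w j = w i0 := by
    intro i hwi
    have h1 : ∑ j, C i j * w j ≤ ∑ j, C i j * w i0 :=
      Finset.sum_le_sum fun j _ => mul_le_mul_of_nonneg_left (hi0' j) (hCnn i j)
    have h2 : ∑ j, C i j * w i0 = (∑ j, C i j) * w i0 := by
      rw [Finset.sum_mul]
    have h3 : (∑ j, C i j) * w i0 ≤ w i0 := by
      nlinarith [hrowle i, hwpos]
    have hsub' : w i0 ≤ ∑ j, C i j * w j := hwi ▸ hsub i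
    -- all inequalities are equalities
    have he1 : ∑ j, C i j * w j = ∑ j, C i j * w i0 := le_antisymm h1 (by linarith)
    have he2 : (∑ j, C i j) = 1 := by
      have : (∑ j, C i j) * w i0 = w i0 := by
        rw [← h2, ← he1]; linarith
      field_simp at this
      rcases mul_eq_mul_right_iff.1 (by linarith [this] : (∑ j, C i j) * w i0 = 1 * w i0) with h | h
      · exact h
      · exact absurd h hwpos.ne'
    -- termwise equality in the AM-GM bound
    have hterm : ∀ j, C i j = (1 - t) * A i j + t * B i j := by
      have hsum : ∑ j, ((1 - t) * A i j + t * B i j) - ∑ j, C i j = 0 := by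
        have : ∑ j, ((1 - t) * A i j + t * B i j) = 1 := by
          rw [Finset.sum_add_distrib, ← Finset.mul_sum, ← Finset.mul_sum, hra i, hrb i]; ring
        rw [this, he2]; ring
      rw [← Finset.sum_sub_distrib] at hsum
      have hz2 := (Finset.sum_eq_zero_iff_of_nonneg
        (fun j _ => sub_nonneg.2 (hCle i j))).1 hsum
      intro j
      have := hz2 j (Finset.mem_univ j)
      linarith [this]
    have hAB : ∀ j, A i j = B i j := fun j => amgm_eq ht ht1 (hA i j) (hB i j) (hterm j)
    refine ⟨hAB, fun j hAij => ?_⟩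
    -- C i j = A i j > 0
    have hCij : C i j = A i j := by
      rw [hCapp, ← hAB j]
      rw [← Real.rpow_add' (hA i j) (by norm_num)]
      norm_num
    -- termwise equality in the weight bound
    have hzero : ∀ j, C i j * (w i0 - w j) = 0 := by
      have hsum : ∑ j, C i j * (w i0 - w j) = 0 := by
        have : ∑ j, C i j * (w i0 - w j) = ∑ j, C i j * w i0 - ∑ j, C i j * w j := by
          rw [← Finset.sum_sub_distrib]
          exact Finset.sum_congr rfl fun j _ => by ring
        rw [this, he1]; ring
      intro j'
      exact (Finset.sum_eq_zero_iff_of_nonneg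
        (fun j' _ => mul_nonneg (hCnn i j') (sub_nonneg.2 (hi0' j')))).1 hsum j'
        (Finset.mem_univ j')
    have := hzero j
    rw [hCij] at this
    rcases mul_eq_zero.1 this with h | h
    · exact absurd h hAij.ne'
    · linarith
  have pow_nonneg' : ∀ (m : ℕ) (i j : Fin n), 0 ≤ (A ^ m) i j := by
    intro m
    induction m with
    | zero => intro i j; rw [pow_zero, Matrix.one_apply]; split <;> norm_num
    | succ m ih =>
        intro i j
        rw [pow_succ, Matrix.mul_apply]
        exact Finset.sum_nonneg fun k _ => mul_nonneg (ih i k) (hA k j)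
  -- propagate along powers of A
  have hprop : ∀ m : ℕ, ∀ j, 0 < (A ^ m) i0 j → w j = w i0 := by
    intro m
    induction m with
    | zero =>
        intro j hj
        by_cases hij : i0 = j
        · rw [hij]
        · rw [pow_zero, Matrix.one_apply_ne hij] at hj
          exact absurd hj (lt_irrefl 0)
    | succ m ih =>
        intro j hj
        rw [pow_succ, Matrix.mul_apply] at hj
        have hex : ∃ k, 0 < (A ^ m) i0 k * A k j := by
          by_contra hcon
          push_neg at hcon
          have : ∀ k ∈ Finset.univ, (A ^ m) i0 k * A k j = 0 := fun k _ =>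
            le_antisymm (hcon k) (mul_nonneg (pow_nonneg' m i0 k) (hA k j))
          rw [Finset.sum_eq_zero this] at hj
          exact lt_irrefl 0 hj
        obtain ⟨k, hk⟩ := hex
        have hk1 : 0 < (A ^ m) i0 k := by
          rcases lt_or_ge 0 ((A ^ m) i0 k) with h | h
          · exact h
          · nlinarith [pow_nonneg' m i0 k, hA k j]
        have hk2 : 0 < A k j := by nlinarith [pow_nonneg' m i0 k, hA k j]
        exact (hkey k (ih k hk1)).2 j hk2
  have hall : ∀ j, w j = w i0 := fun j => by
    obtain ⟨m, -, hm⟩ := hirr i0 j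
    exact hprop m j hm
  ext i j
  exact (hkey i (hall i)).1 j

lemma scaled_pow (A : Matrix (Fin n) (Fin n) ℝ) (v : Fin n → ℝ) (hv : ∀ i, 0 < v i)
    (r : ℝ) (hr : 0 < r) :
    ∀ (m : ℕ) (i j : Fin n),
      ((Matrix.of fun i j => A i j * v j / (r * v i)) ^ m) i j
        = (A ^ m) i j * v j / (r ^ m * v i) := by
  intro m
  induction m with
  | zero =>
      intro i j
      rw [pow_zero, pow_zero, pow_zero]
      rcases eq_or_ne i j with rfl | hij
      · rw [Matrix.one_apply_eq, one_mul, div_self (hv i).ne']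
      · rw [Matrix.one_apply_ne hij]
        simp
  | succ m ih =>
      intro i j
      rw [pow_succ, pow_succ, Matrix.mul_apply, Matrix.mul_apply]
      have hterm : ∀ k, ((Matrix.of fun i j => A i j * v j / (r * v i)) ^ m) i k *
          (Matrix.of fun i j => A i j * v j / (r * v i)) k j
          = (A ^ m) i k * A k j * v j / (r ^ (m + 1) * v i) := by
        intro k
        rw [ih i k]
        show (A ^ m) i k * v k / (r ^ m * v i) * (A k j * v j / (r * v k)) = _
        have h1 : v k ≠ 0 := (hv k).ne'
        have h2 : v i ≠ 0 := (hv i).ne'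
        have h3 : r ≠ 0 := hr.ne'
        field_simp
        ring
      rw [Finset.sum_congr rfl fun k _ => hterm k, ← Finset.sum_div, ← Finset.sum_mul]
  
lemma scaled_irred (A : Matrix (Fin n) (Fin n) ℝ) (hA : ∀ i j, 0 ≤ A i j)
    (v : Fin n → ℝ) (hv : ∀ i, 0 < v i)
    (r : ℝ) (hr : 0 < r) (hirr : MatIrred A) :
    MatIrred (Matrix.of fun i j => A i j * v j / (r * v i)) := by
  intro i j
  obtain ⟨m, hm, hpos⟩ := hirr i j
  refine ⟨m, hm, ?_⟩
  rw [scaled_pow A v hv r hr m i j]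
  exact div_pos (mul_pos hpos (hv j)) (mul_pos (pow_pos hr m) (hv i))

lemma specRad_hadamard {hn : 0 < n} (A : Matrix (Fin n) (Fin n) ℝ)
    (hA : ∀ i j, 0 ≤ A i j)
    (v : Fin n → ℝ) (hv : ∀ i, 0 < v i) (rA : ℝ) (heig : A.mulVec v = rA • v)
    (hrA : 0 < rA)
    (B : Matrix (Fin n) (Fin n) ℝ) (c : ℝ) (hc : 0 < c) (E : Fin n → ℝ)
    (hE : ∀ i, 0 < E i)
    (hBdef : ∀ i j, B i j = c * ((E i)⁻¹ * A i j * E j))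
    (t : ℝ) (ht0 : 0 ≤ t) (ht1 : t ≤ 1) :
    specRad (Matrix.of fun i j => A i j ^ (1 - t) * B i j ^ t) = c ^ t * rA := by
  have hEt : ∀ k, E k ^ t ≠ 0 := fun k => (Real.rpow_pos_of_pos (hE k) t).ne'
  have hCentry : ∀ i j, (Matrix.of fun i j => A i j ^ (1 - t) * B i j ^ t) i j
      = c ^ t * ((E i ^ t)⁻¹ * A i j * E j ^ t) := by
    intro i j
    show A i j ^ (1 - t) * B i j ^ t = _
    rw [hBdef i j]
    rcases eq_or_lt_of_le (hA i j) with h0 | h0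
    · -- A i j = 0
      rw [← h0]
      simp only [mul_zero, zero_mul]
      rcases eq_or_lt_of_le ht0 with ht00 | htpos
      · rw [← ht00, sub_zero, Real.rpow_one, zero_mul]
      · rw [Real.zero_rpow htpos.ne', mul_zero]
    · have hX : (0:ℝ) < (E i)⁻¹ * A i j * E j :=
        mul_pos (mul_pos (inv_pos.2 (hE i)) h0) (hE j)
      rw [Real.mul_rpow hc.le hX.le,
        Real.mul_rpow (mul_nonneg (inv_nonneg.2 (hE i).le) h0.le) (hE j).le,
        Real.mul_rpow (inv_nonneg.2 (hE i).le) h0.le,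
        Real.inv_rpow (hE i).le]
      have hA1 : A i j ^ (1 - t) * A i j ^ t = A i j := by
        rw [← Real.rpow_add h0]
        norm_num
      calc A i j ^ (1 - t) * (c ^ t * ((E i ^ t)⁻¹ * A i j ^ t * E j ^ t))
          = (A i j ^ (1 - t) * A i j ^ t) * (c ^ t * ((E i ^ t)⁻¹ * E j ^ t)) := by ring
        _ = c ^ t * ((E i ^ t)⁻¹ * A i j * E j ^ t) := by rw [hA1]; ring
  have hCnn : ∀ i j, 0 ≤ (Matrix.of fun i j => A i j ^ (1 - t) * B i j ^ t) i j := by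
    intro i j
    rw [hCentry]
    exact mul_nonneg (Real.rpow_nonneg hc.le t)
      (mul_nonneg (mul_nonneg (inv_nonneg.2 (Real.rpow_nonneg (hE i).le t)) (hA i j))
        (Real.rpow_nonneg (hE j).le t))
  set w : Fin n → ℝ := fun i => (E i ^ t)⁻¹ * v i with hwdef
  have hw : ∀ i, 0 < w i := fun i => by
    have h1 := Real.rpow_pos_of_pos (hE i) t
    have h2 := hv i
    show 0 < (E i ^ t)⁻¹ * v i
    positivity
  have heigC : (Matrix.of fun i j => A i j ^ (1 - t) * B i j ^ t).mulVec w
      = (c ^ t * rA) • w := by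
    funext i
    simp only [Matrix.mulVec, dotProduct, Pi.smul_apply, smul_eq_mul]
    have hterm : ∀ j, (Matrix.of fun i j => A i j ^ (1 - t) * B i j ^ t) i j * w j
        = c ^ t * (E i ^ t)⁻¹ * (A i j * v j) := by
      intro j
      rw [hCentry]
      show c ^ t * ((E i ^ t)⁻¹ * A i j * E j ^ t) * ((E j ^ t)⁻¹ * v j) = _
      have h1 : E j ^ t * (E j ^ t)⁻¹ = 1 := mul_inv_cancel₀ (hEt j)
      calc c ^ t * ((E i ^ t)⁻¹ * A i j * E j ^ t) * ((E j ^ t)⁻¹ * v j)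
          = c ^ t * (E i ^ t)⁻¹ * (A i j * v j) * (E j ^ t * (E j ^ t)⁻¹) := by ring
        _ = c ^ t * (E i ^ t)⁻¹ * (A i j * v j) := by rw [h1, mul_one]
    rw [Finset.sum_congr rfl fun j _ => hterm j, ← Finset.mul_sum]
    have hsum : ∑ j, A i j * v j = rA * v i := by
      have := congrFun heig i
      simpa [Matrix.mulVec, dotProduct] using this
    rw [hsum, hwdef]
    ring
  exact specRad_eq (hn := hn) _ hCnn w hw _ heigC

end PFAux

theorem stmt3 {n : ℕ} (A B : Matrix (Fin n) (Fin n) ℝ)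
    (hA : ∀ i j, 0 ≤ A i j) (hB : ∀ i j, 0 ≤ B i j)
    (hAirr : MatIrred A) (hBirr : MatIrred B) :
    ((∃ t ∈ Set.Ioo (0:ℝ) 1,
        specRad (Matrix.of fun i j => A i j ^ (1 - t) * B i j ^ t) =
          specRad A ^ (1 - t) * specRad B ^ t) ↔
      ∃ E : Fin n → ℝ, (∀ i, 0 < E i) ∧
        B = (specRad B / specRad A) • ((Matrix.diagonal E)⁻¹ * A * Matrix.diagonal E)) ∧
    ((∃ E : Fin n → ℝ, (∀ i, 0 < E i) ∧
        B = (specRad B / specRad A) • ((Matrix.diagonal E)⁻¹ * A * Matrix.diagonal E)) →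
      ∀ t ∈ Set.Icc (0:ℝ) 1,
        specRad (Matrix.of fun i j => A i j ^ (1 - t) * B i j ^ t) =
          specRad A ^ (1 - t) * specRad B ^ t) := by
  classical
  rcases Nat.eq_zero_or_pos n with hn0 | hn
  · -- degenerate case n = 0
    subst hn0
    have hsr : ∀ M : Matrix (Fin 0) (Fin 0) ℝ, specRad M = 0 := by
      intro M
      have hsp : spectrum ℂ (M.map Complex.ofReal) = ∅ := by
        ext μ
        simp only [spectrum.mem_iff, Set.mem_empty_iff_false, iff_false, not_not]
        haveI : Subsingleton (Matrix (Fin 0) (Fin 0) ℂ) :=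
          ⟨fun a b => Matrix.ext fun i => i.elim0⟩
        exact isUnit_of_subsingleton _
      show sSup _ = 0
      rw [show {x : ℝ | ∃ μ ∈ spectrum ℂ (M.map Complex.ofReal), x = ‖μ‖} = ∅ by
        rw [hsp]; ext x; simp]
      exact Real.sSup_empty
    have hzero01 : ∀ t : ℝ, 0 ≤ t → (0:ℝ) = 0 ^ (1 - t) * 0 ^ t := by
      intro t ht0
      rcases eq_or_ne t 0 with rfl | ht0'
      · norm_num
      · rw [Real.zero_rpow ht0', mul_zero]
    have hmat : ∀ M N : Matrix (Fin 0) (Fin 0) ℝ, M = N :=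
      fun M N => Matrix.ext fun i => i.elim0
    refine ⟨⟨fun _ => ⟨fun _ => 1, fun i => i.elim0, hmat _ _⟩, fun _ => ?_⟩, fun _ t ht => ?_⟩
    · exact ⟨1/2, ⟨by norm_num, by norm_num⟩, by
        rw [hsr, hsr, hsr]; exact hzero01 _ (by norm_num)⟩
    · rw [hsr, hsr, hsr]; exact hzero01 t ht.1
  · obtain ⟨v, hv, hAv, hrA⟩ := PFAux.perron (hn := hn) A hA hAirr
    obtain ⟨u, hu, hBu, hrB⟩ := PFAux.perron (hn := hn) B hB hBirr
    have hdiag : ∀ (E : Fin n → ℝ), (∀ i, 0 < E i) → ∀ (c : ℝ)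
        (M : Matrix (Fin n) (Fin n) ℝ) (i j : Fin n),
        (c • ((Matrix.diagonal E)⁻¹ * M * Matrix.diagonal E)) i j
          = c * ((E i)⁻¹ * M i j * E j) := by
      intro E hE c M i j
      have hinv : (Matrix.diagonal E)⁻¹ = Matrix.diagonal (fun i => (E i)⁻¹) := by
        apply Matrix.inv_eq_right_inv
        rw [Matrix.diagonal_mul_diagonal]
        have h2 : (fun i => E i * (E i)⁻¹) = fun _ => (1:ℝ) :=
          funext fun i => mul_inv_cancel₀ (hE i).ne'
        rw [h2]
        exact Matrix.diagonal_one
      rw [hinv, Matrix.smul_apply, Matrix.mul_diagonal, Matrix.diagonal_mul, smul_eq_mul]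
    have hpart2 : (∃ E : Fin n → ℝ, (∀ i, 0 < E i) ∧
        B = (specRad B / specRad A) • ((Matrix.diagonal E)⁻¹ * A * Matrix.diagonal E)) →
        ∀ t ∈ Set.Icc (0:ℝ) 1,
          specRad (Matrix.of fun i j => A i j ^ (1 - t) * B i j ^ t) =
            specRad A ^ (1 - t) * specRad B ^ t := by
      rintro ⟨E, hE, hBeq⟩ t ⟨ht0, ht1⟩
      have hent : ∀ i j, B i j = (specRad B / specRad A) * ((E i)⁻¹ * A i j * E j) := by
        intro i j
        conv_lhs => rw [hBeq]
        exact hdiag E hE _ A i j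
      have hc : 0 < specRad B / specRad A := div_pos hrB hrA
      rw [PFAux.specRad_hadamard (hn := hn) A hA v hv (specRad A) hAv hrA B _ hc E hE
        hent t ht0 ht1]
      rw [Real.div_rpow hrB.le hrA.le, Real.rpow_sub hrA, Real.rpow_one]
      have h1 : specRad A ^ t ≠ 0 := (Real.rpow_pos_of_pos hrA t).ne'
      field_simp
    refine ⟨⟨?_, fun hE => ⟨1/2, ⟨by norm_num, by norm_num⟩,
      hpart2 hE (1/2) ⟨by norm_num, by norm_num⟩⟩⟩, hpart2⟩
    rintro ⟨t, ⟨ht0, ht1⟩, hspec⟩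
    set rA := specRad A with hrAdef
    set rB := specRad B with hrBdef
    set s := rA ^ (1 - t) * rB ^ t with hs
    have hspos : 0 < s :=
      mul_pos (Real.rpow_pos_of_pos hrA _) (Real.rpow_pos_of_pos hrB _)
    set At : Matrix (Fin n) (Fin n) ℝ := Matrix.of fun i j => A i j * v j / (rA * v i)
      with hAt
    set Bt : Matrix (Fin n) (Fin n) ℝ := Matrix.of fun i j => B i j * u j / (rB * u i)
      with hBt
    have hAtapp : ∀ i j, At i j = A i j * v j / (rA * v i) := fun i j => rfl
    have hBtapp : ∀ i j, Bt i j = B i j * u j / (rB * u i) := fun i j => rfl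
    have hAtnn : ∀ i j, 0 ≤ At i j := fun i j => by
      rw [hAtapp]
      exact div_nonneg (mul_nonneg (hA i j) (hv j).le) (mul_nonneg hrA.le (hv i).le)
    have hBtnn : ∀ i j, 0 ≤ Bt i j := fun i j => by
      rw [hBtapp]
      exact div_nonneg (mul_nonneg (hB i j) (hu j).le) (mul_nonneg hrB.le (hu i).le)
    have hAtrow : ∀ i, ∑ j, At i j = 1 := by
      intro i
      have hsum : ∑ j, A i j * v j = rA * v i := by
        have := congrFun hAv i
        simpa [Matrix.mulVec, dotProduct] using this
      calc ∑ j, At i j = ∑ j, A i j * v j / (rA * v i) :=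
            Finset.sum_congr rfl fun j _ => hAtapp i j
        _ = 1 := by rw [← Finset.sum_div, hsum, div_self (mul_pos hrA (hv i)).ne']
    have hBtrow : ∀ i, ∑ j, Bt i j = 1 := by
      intro i
      have hsum : ∑ j, B i j * u j = rB * u i := by
        have := congrFun hBu i
        simpa [Matrix.mulVec, dotProduct] using this
      calc ∑ j, Bt i j = ∑ j, B i j * u j / (rB * u i) :=
            Finset.sum_congr rfl fun j _ => hBtapp i j
        _ = 1 := by rw [← Finset.sum_div, hsum, div_self (mul_pos hrB (hu i)).ne']
    obtain ⟨μ0, hμ0spec, hμ0abs⟩ := PFAux.exists_attain (hn := hn)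
      (Matrix.of fun i j => A i j ^ (1 - t) * B i j ^ t)
    rw [PFAux.mem_spec_iff] at hμ0spec
    obtain ⟨z0, hz0, hz0eig⟩ := hμ0spec
    rw [hspec] at hμ0abs
    set d : Fin n → ℝ := fun i => v i ^ (1 - t) * u i ^ t with hd
    have hdpos : ∀ i, 0 < d i := fun i =>
      mul_pos (Real.rpow_pos_of_pos (hv i) _) (Real.rpow_pos_of_pos (hu i) _)
    have hCt : ∀ i j, At i j ^ (1 - t) * Bt i j ^ t
        = (A i j ^ (1 - t) * B i j ^ t) * d j / (s * d i) := by
      intro i j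
      rw [hAtapp, hBtapp]
      rw [Real.div_rpow (mul_nonneg (hA i j) (hv j).le) (mul_nonneg hrA.le (hv i).le),
        Real.div_rpow (mul_nonneg (hB i j) (hu j).le) (mul_nonneg hrB.le (hu i).le),
        Real.mul_rpow (hA i j) (hv j).le, Real.mul_rpow (hB i j) (hu j).le,
        Real.mul_rpow hrA.le (hv i).le, Real.mul_rpow hrB.le (hu i).le]
      simp only [hd, hs]
      have h1 : rA ^ (1 - t) ≠ 0 := (Real.rpow_pos_of_pos hrA _).ne'
      have h2 : rB ^ t ≠ 0 := (Real.rpow_pos_of_pos hrB _).ne'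
      have h3 : v i ^ (1 - t) ≠ 0 := (Real.rpow_pos_of_pos (hv i) _).ne'
      have h4 : u i ^ t ≠ 0 := (Real.rpow_pos_of_pos (hu i) _).ne'
      field_simp
    set z : Fin n → ℂ := fun i => z0 i / (d i : ℂ) with hz
    have hdC : ∀ i, (d i : ℂ) ≠ 0 := fun i => by exact_mod_cast (hdpos i).ne'
    have hsC : ((s : ℝ) : ℂ) ≠ 0 := by exact_mod_cast hspos.ne'
    have hzne : z ≠ 0 := by
      obtain ⟨j, hj⟩ := Function.ne_iff.1 hz0
      intro h0
      have h1 := congrFun h0 j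
      simp only [hz, Pi.zero_apply, div_eq_zero_iff] at h1
      rcases h1 with h1 | h1
      · exact hj h1
      · exact hdC j h1
    have hCz : ∀ i, ∑ j, ((A i j ^ (1 - t) * B i j ^ t : ℝ) : ℂ) * z0 j = μ0 * z0 i := by
      intro i
      have := congrFun hz0eig i
      simpa [Matrix.mulVec, dotProduct, Matrix.map_apply] using this
    have heig2 : ((Matrix.of fun i j => At i j ^ (1 - t) * Bt i j ^ t).map
        Complex.ofReal).mulVec z = (μ0 / ((s:ℝ):ℂ)) • z := by
      funext i
      simp only [Matrix.mulVec, dotProduct, Matrix.map_apply, Pi.smul_apply,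
        smul_eq_mul, Matrix.of_apply]
      have hterm : ∀ j, ((At i j ^ (1 - t) * Bt i j ^ t : ℝ) : ℂ) * z j
          = (((s:ℝ):ℂ) * (d i : ℂ))⁻¹ * (((A i j ^ (1 - t) * B i j ^ t : ℝ) : ℂ) * z0 j) := by
        intro j
        rw [hCt i j]
        have hcast : ((A i j ^ (1 - t) * B i j ^ t * d j / (s * d i) : ℝ) : ℂ)
            = ((A i j ^ (1 - t) * B i j ^ t : ℝ) : ℂ) * (d j : ℂ)
              / (((s:ℝ):ℂ) * (d i : ℂ)) := by
          push_cast
          ring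
        rw [hcast]
        show ((A i j ^ (1 - t) * B i j ^ t : ℝ) : ℂ) * (d j : ℂ)
            / (((s:ℝ):ℂ) * (d i : ℂ)) * (z0 j / (d j : ℂ)) = _
        have hgen : ∀ (a b c e : ℂ), b ≠ 0 → c ≠ 0 →
            a * b / c * (e / b) = c⁻¹ * (a * e) := by
          intro a b c e hb hc
          field_simp
        exact hgen _ _ _ _ (hdC j) (mul_ne_zero hsC (hdC i))
      rw [Finset.sum_congr rfl fun j _ => hterm j, ← Finset.mul_sum, hCz i]
      show (((s:ℝ):ℂ) * (d i : ℂ))⁻¹ * (μ0 * z0 i) = μ0 / ((s:ℝ):ℂ) * (z0 i / (d i : ℂ))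
      field_simp
    have habs : ‖μ0 / ((s:ℝ):ℂ)‖ = 1 := by
      rw [norm_div, hμ0abs, Complex.norm_real, Real.norm_eq_abs, abs_of_pos hspos, div_self hspos.ne']
    have hABt : At = Bt := PFAux.stoch_eq At Bt hAtnn hBtnn hAtrow hBtrow hn
      (PFAux.scaled_irred A hA v hv rA hrA hAirr) t ht0 ht1 (μ0 / ((s:ℝ):ℂ)) habs z hzne heig2
    refine ⟨fun i => v i / u i, fun i => div_pos (hv i) (hu i), ?_⟩
    ext i j
    rw [hdiag _ (fun i => div_pos (hv i) (hu i)) _ A i j]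
    have h1 : A i j * v j / (rA * v i) = B i j * u j / (rB * u i) := by
      rw [← hAtapp, ← hBtapp, hABt]
    have hvine : v i ≠ 0 := (hv i).ne'
    have huine : u i ≠ 0 := (hu i).ne'
    have hvjne : v j ≠ 0 := (hv j).ne'
    have hujne : u j ≠ 0 := (hu j).ne'
    have hrAne : rA ≠ 0 := hrA.ne'
    have hrBne : rB ≠ 0 := hrB.ne'
    field_simp at h1 ⊢
    nlinarith [h1]
end
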